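/- arXiv:2603.22878 — 8 statements merged into one kernel-verified Lean document; each statement's English description precedes it below -/
import Mathlib

section
/- The sequence of k-generalized Lucas numbers {L_n^{(k)}} is periodic modulo 2 with period k+1; that is, L_n^{(k)} ≡ L_{n+(k+1)}^{(k)} (mod 2) for all integers n. -/
theorem stmt_5 (k : ℕ) (hk : 2 ≤ k) (L : ℤ → ℤ)
    (hL0 : L 0 = 2) (hL1 : L 1 = 1)
    (hLneg : ∀ n : ℤ, 2 - (k : ℤ) ≤ n → n ≤ -1 → L n = 0)
    (hLrec : ∀ n : ℤ, L n = ∑ i ∈ Finset.range k, L (n - 1 - (i : ℤ))) :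
    ∀ n : ℤ, L n ≡ L (n + ((k : ℤ) + 1)) [ZMOD 2] := by
  obtain ⟨m, rfl⟩ : ∃ m, k = m + 1 := ⟨k - 1, by omega⟩
  have key : ∀ n : ℤ, L (n + ((m : ℤ) + 1) + 1) + L n = 2 * L (n + ((m : ℤ) + 1)) := by
    intro n
    have h1 := hLrec (n + ((m : ℤ) + 1) + 1)
    have h2 := hLrec (n + ((m : ℤ) + 1))
    rw [Finset.sum_range_succ'] at h1
    rw [Finset.sum_range_succ] at h2
    push_cast at h1 h2
    have e : ∀ x : ℕ, n + ((m : ℤ) + 1) + 1 - 1 - ((x : ℤ) + 1)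
        = n + ((m : ℤ) + 1) - 1 - (x : ℤ) := fun x => by ring
    simp only [e] at h1
    rw [show n + ((m : ℤ) + 1) + 1 - 1 - (0 : ℤ) = n + ((m : ℤ) + 1) by ring] at h1
    rw [show n + ((m : ℤ) + 1) - 1 - (m : ℤ) = n by ring] at h2
    linarith
  intro n
  have h := key n
  rw [Int.modEq_iff_dvd, show n + ((↑(m + 1) : ℤ) + 1) = n + ((m : ℤ) + 1) + 1 by push_cast; ring]
  exact ⟨L (n + ((m : ℤ) + 1)) - L n, by linarith⟩
end

section
/- Let k ≥ 2 and write n = m(k+1) with m ≥ 0 an integer. Then L_n^{(k)} ≡ 2·(−1)^m (mod 2^{k−2}). -/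
theorem stmt_6 (k : ℕ) (hk : 2 ≤ k) (L : ℤ → ℤ)
    (hL0 : L 0 = 2) (hL1 : L 1 = 1)
    (hLneg : ∀ n : ℤ, 2 - (k : ℤ) ≤ n → n ≤ -1 → L n = 0)
    (hLrec : ∀ n : ℤ, L n = ∑ i ∈ Finset.range k, L (n - 1 - (i : ℤ)))
    (m : ℕ) (n : ℤ) (hn : n = (m : ℤ) * ((k : ℤ) + 1)) :
    L n ≡ 2 * (-1) ^ m [ZMOD 2 ^ (k - 2)] := by
  obtain ⟨t, ht⟩ : ∃ t, k = t + 1 := ⟨k - 1, by omega⟩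
  have hstep : ∀ x : ℤ, L x = 2 * L (x - 1) - L (x - 1 - k) := by
    intro x
    have h1 := hLrec x
    have h2 := hLrec (x - 1)
    rw [ht, Finset.sum_range_succ'] at h1
    rw [ht, Finset.sum_range_succ] at h2
    push_cast at h1 h2
    have e1 : ∑ i ∈ Finset.range t, L (x - 1 - ((i:ℤ) + 1)) =
        ∑ i ∈ Finset.range t, L (x - 1 - 1 - (i:ℤ)) := by
      refine Finset.sum_congr rfl fun i _ => ?_
      congr 1; ring
    rw [e1] at h1
    have e2 : x - 1 - 1 - (t:ℤ) = x - 1 - (k:ℤ) := by rw [ht]; push_cast; ring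
    rw [e2] at h2
    simp only [sub_zero] at h1
    linarith
  have D : ∀ m : ℕ, ∀ j : ℕ, 2 ≤ j → j ≤ k →
      (2:ℤ) ^ (j - 2) ∣ L ((m:ℤ) * ((k:ℤ) + 1) + (j:ℤ)) := by
    intro m
    induction m with
    | zero =>
      intro j
      induction j with
      | zero => omega
      | succ j ihj =>
        intro h2 hle
        simp only [Nat.cast_zero] at ihj ⊢
        rcases Nat.lt_or_ge j 2 with hj | hj
        · interval_cases j
          · omega
          · simpa using one_dvd _
        · have hLj := ihj hj (by omega)
          have hx := hstep ((0:ℤ) * ((k:ℤ)+1) + ((j:ℕ)+1 : ℤ))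
          have e1 : (0:ℤ) * ((k:ℤ)+1) + ((j:ℕ)+1 : ℤ) - 1 = (0:ℤ) * ((k:ℤ)+1) + (j:ℤ) := by ring
          have e2 : L ((0:ℤ) * ((k:ℤ)+1) + ((j:ℕ)+1 : ℤ) - 1 - (k:ℤ)) = 0 := by
            apply hLneg <;> push_cast <;> omega
          rw [e2] at hx
          rw [e1, sub_zero] at hx
          have e3 : ((j:ℕ)+1 : ℕ) - 2 = (j - 2) + 1 := by omega
          have e4 : ((0:ℤ) * ((k:ℤ)+1) + (((j:ℕ)+1 : ℕ) : ℤ)) = (0:ℤ) * ((k:ℤ)+1) + ((j:ℕ)+1 : ℤ) := by push_cast; ring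
          rw [e4, hx, e3, pow_succ]
          rw [mul_comm ((2:ℤ)^(j-2)) 2]
          exact mul_dvd_mul_left 2 hLj
    | succ m ihm =>
      intro j
      induction j with
      | zero => omega
      | succ j ihj =>
        intro h2 hle
        rcases Nat.lt_or_ge j 2 with hj | hj
        · interval_cases j
          · omega
          · simpa using one_dvd _
        · have hLj := ihj hj (by omega)
          have hprev := ihm (j+1) (by omega) hle
          have hx := hstep (((m:ℕ)+1 : ℤ) * ((k:ℤ)+1) + ((j:ℕ)+1 : ℤ))
          have e1 : ((m:ℕ)+1 : ℤ) * ((k:ℤ)+1) + ((j:ℕ)+1 : ℤ) - 1 = ((m:ℕ)+1 : ℤ) * ((k:ℤ)+1) + (j:ℤ) := by ring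
          have e2 : ((m:ℕ)+1 : ℤ) * ((k:ℤ)+1) + ((j:ℕ)+1 : ℤ) - 1 - (k:ℤ) = (m:ℤ) * ((k:ℤ)+1) + ((j:ℕ)+1 : ℤ) := by ring
          rw [e2, e1] at hx
          have e3 : ((j:ℕ)+1 : ℕ) - 2 = j - 1 := by omega
          have e4 : ((((m:ℕ)+1 : ℕ)) : ℤ) * ((k:ℤ)+1) + (((j:ℕ)+1 : ℕ) : ℤ) = ((m:ℕ)+1 : ℤ) * ((k:ℤ)+1) + ((j:ℕ)+1 : ℤ) := by push_cast; ring
          have e5 : (((j:ℕ)+1 : ℕ) : ℤ) = ((j:ℕ)+1 : ℤ) := by push_cast; ring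
          rw [e4, hx, e3]
          have h1 : (2:ℤ) ^ (j-1) ∣ 2 * L (((m:ℕ)+1 : ℤ) * ((k:ℤ)+1) + (j:ℤ)) := by
            have : (j:ℕ) - 1 = ((j:ℕ) - 2) + 1 := by omega
            rw [this, pow_succ, mul_comm ((2:ℤ)^(j-2)) 2]
            exact mul_dvd_mul_left 2 hLj
          have h2' : (2:ℤ) ^ (j-1) ∣ L ((m:ℤ) * ((k:ℤ)+1) + ((j:ℕ)+1 : ℤ)) := by
            have : (j:ℕ)+1 - 2 = j - 1 := by omega
            rw [← this]
            rw [e5] at hprev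
            exact hprev
          exact dvd_sub h1 h2'
  have main : ∀ m : ℕ, (2:ℤ) ^ (k - 2) ∣ L ((m:ℤ) * ((k:ℤ) + 1)) - 2 * (-1) ^ m := by
    intro m
    induction m with
    | zero => simp [hL0]
    | succ m ihm =>
      have hDk := D m k hk le_rfl
      have hx := hstep (((m:ℕ)+1 : ℤ) * ((k:ℤ)+1))
      have e1 : ((m:ℕ)+1 : ℤ) * ((k:ℤ)+1) - 1 = (m:ℤ) * ((k:ℤ)+1) + (k:ℤ) := by ring
      have e2 : ((m:ℕ)+1 : ℤ) * ((k:ℤ)+1) - 1 - (k:ℤ) = (m:ℤ) * ((k:ℤ)+1) := by ring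
      rw [e2, e1] at hx
      have e4 : ((((m:ℕ)+1 : ℕ)) : ℤ) * ((k:ℤ)+1) = ((m:ℕ)+1 : ℤ) * ((k:ℤ)+1) := by push_cast; ring
      rw [e4, hx]
      have : 2 * L ((m:ℤ) * ((k:ℤ)+1) + (k:ℤ)) - L ((m:ℤ) * ((k:ℤ)+1)) - 2 * (-1) ^ (m+1)
          = 2 * L ((m:ℤ) * ((k:ℤ)+1) + (k:ℤ)) - (L ((m:ℤ) * ((k:ℤ)+1)) - 2 * (-1) ^ m) := by
        ring
      rw [this]
      exact dvd_sub (Dvd.dvd.mul_left hDk 2) ihm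
  rw [hn]
  exact ((Int.modEq_iff_dvd).mpr (main m)).symm
end

section
/- Let k ≥ 2 and write n = 1 + m(k+1) with m ≥ 0 an integer. Then L_n^{(k)} ≡ (4m+1)·(−1)^m (mod 2^{k−1}). -/
theorem stmt_7 (k : ℕ) (hk : 2 ≤ k) (L : ℤ → ℤ)
    (hL0 : L 0 = 2) (hL1 : L 1 = 1)
    (hLneg : ∀ n : ℤ, 2 - (k : ℤ) ≤ n → n ≤ -1 → L n = 0)
    (hLrec : ∀ n : ℤ, L n = ∑ i ∈ Finset.range k, L (n - 1 - (i : ℤ)))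
    (m : ℕ) (n : ℤ) (hn : n = 1 + (m : ℤ) * ((k : ℤ) + 1)) :
    L n ≡ (4 * (m : ℤ) + 1) * (-1) ^ m [ZMOD 2 ^ (k - 1)] := by
  -- second-order style recurrence: L x = 2 L (x-1) - L (x-1-k)
  have key : ∀ x : ℤ, L x = 2 * L (x - 1) - L (x - 1 - (k:ℤ)) := by
    intro x
    have h1 := hLrec x
    have h2 := hLrec (x - 1)
    have hsub : ∀ i ∈ Finset.range k,
        L (x - 1 - 1 - (i:ℤ)) = L (x - 1 - ((i+1 : ℕ) : ℤ)) := by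
      intro i _; congr 1; push_cast; ring
    rw [Finset.sum_congr rfl hsub] at h2
    have h3 : (∑ i ∈ Finset.range k,
          (L (x - 1 - (i:ℤ)) - L (x - 1 - ((i+1:ℕ):ℤ))))
        = L (x - 1 - ((0:ℕ):ℤ)) - L (x - 1 - ((k:ℕ):ℤ)) :=
      Finset.sum_range_sub' (fun i : ℕ => L (x - 1 - (i:ℤ))) k
    rw [Finset.sum_sub_distrib] at h3
    have c0 : x - 1 - ((0:ℕ):ℤ) = x - 1 := by push_cast; ring
    rw [c0] at h3
    linarith [h1, h2, h3]
  -- L 2 = 3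
  have hL2 : L 2 = 3 := by
    obtain ⟨l, hl⟩ : ∃ l, k = l + 2 := ⟨k - 2, by omega⟩
    have h := hLrec 2
    rw [hl] at h
    rw [Finset.sum_range_succ', Finset.sum_range_succ'] at h
    have hz : (∑ i ∈ Finset.range l, L (2 - 1 - ((i + 1 + 1 : ℕ) : ℤ))) = 0 := by
      apply Finset.sum_eq_zero
      intro i hi
      have hi' := Finset.mem_range.mp hi
      apply hLneg <;> omega
    rw [hz] at h
    norm_num at h
    rw [hL0, hL1] at h
    linarith
  -- base values L (s+2) = 3 * 2^s for s+2 ≤ k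
  have hbase : ∀ s : ℕ, s + 2 ≤ k → L ((s:ℤ) + 2) = 3 * 2 ^ s := by
    intro s
    induction s with
    | zero => intro _; norm_num [hL2]
    | succ t ih =>
      intro hs
      have h := key ((t:ℤ) + 3)
      have e1 : (t:ℤ) + 3 - 1 = (t:ℤ) + 2 := by ring
      have hneg : L ((t:ℤ) + 3 - 1 - (k:ℤ)) = 0 := by
        apply hLneg <;> omega
      rw [hneg, e1, ih (by omega)] at h
      have e2 : ((t+1 : ℕ) : ℤ) + 2 = (t:ℤ) + 3 := by push_cast; ring
      rw [e2, h]; ring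
  -- Claim A : 2^i divides L ((i+2) + m (k+1))
  have hA : ∀ i : ℕ, i + 2 ≤ k → ∀ m : ℕ,
      (2:ℤ) ^ i ∣ L (((i:ℤ) + 2) + (m:ℤ) * ((k:ℤ) + 1)) := by
    intro i
    induction i with
    | zero => intro _ m; simp
    | succ t ih =>
      intro hik m
      induction m with
      | zero =>
        have e : ((t+1:ℕ):ℤ) + 2 + ((0:ℕ):ℤ) * ((k:ℤ)+1) = ((t+1:ℕ):ℤ) + 2 := by
          push_cast; ring
        rw [e, hbase (t+1) (by omega)]
        exact Dvd.dvd.mul_left dvd_rfl 3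
      | succ p ihp =>
        have e1 : ((t+1:ℕ):ℤ) + 2 + ((p+1:ℕ):ℤ) * ((k:ℤ)+1)
            = ((t:ℤ)+3) + ((p:ℤ)+1)*((k:ℤ)+1) := by push_cast; ring
        rw [e1, key]
        have e2 : (t:ℤ)+3 + ((p:ℤ)+1)*((k:ℤ)+1) - 1
            = ((t:ℤ)+2) + ((p+1:ℕ):ℤ)*((k:ℤ)+1) := by push_cast; ring
        have e3 : (t:ℤ)+3 + ((p:ℤ)+1)*((k:ℤ)+1) - 1 - (k:ℤ)
            = ((t+1:ℕ):ℤ)+2 + ((p:ℕ):ℤ)*((k:ℤ)+1) := by push_cast; ring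
        rw [e3, e2]
        refine dvd_sub ?_ ihp
        have hpow : (2:ℤ)^(t+1) = 2 * 2^t := by ring
        rw [hpow]
        exact mul_dvd_mul_left 2 (ih (by omega) (p+1))
  -- Claim B : L (m(k+1)) ≡ 2 (-1)^m
  have hB : ∀ m : ℕ, (2:ℤ)^(k-1) ∣ L ((m:ℤ) * ((k:ℤ)+1)) - 2 * (-1)^m := by
    intro m
    induction m with
    | zero => norm_num [hL0]
    | succ p ih =>
      have hk2 : ((k-2:ℕ):ℤ) = (k:ℤ) - 2 := by omega
      have hAk := hA (k-2) (by omega) p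
      rw [hk2] at hAk
      have e0 : (k:ℤ) - 2 + 2 + (p:ℤ)*((k:ℤ)+1) = (k:ℤ) + (p:ℤ)*((k:ℤ)+1) := by ring
      rw [e0] at hAk
      have h := key (((p:ℤ)+1) * ((k:ℤ)+1))
      have e1 : ((p:ℤ)+1)*((k:ℤ)+1) - 1 = (k:ℤ) + (p:ℤ)*((k:ℤ)+1) := by ring
      have e2 : ((p:ℤ)+1)*((k:ℤ)+1) - 1 - (k:ℤ) = (p:ℤ)*((k:ℤ)+1) := by ring
      rw [e2, e1] at h
      have e3 : ((p+1:ℕ):ℤ) * ((k:ℤ)+1) = ((p:ℤ)+1)*((k:ℤ)+1) := by push_cast; ring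
      rw [e3, h]
      have expand : 2 * L ((k:ℤ) + (p:ℤ)*((k:ℤ)+1)) - L ((p:ℤ)*((k:ℤ)+1)) - 2*(-1:ℤ)^(p+1)
          = 2 * L ((k:ℤ) + (p:ℤ)*((k:ℤ)+1)) - (L ((p:ℤ)*((k:ℤ)+1)) - 2*(-1:ℤ)^p) := by ring
      rw [expand]
      refine dvd_sub ?_ ih
      have hpow : (2:ℤ)^(k-1) = 2 * 2^(k-2) := by
        have hh : k - 1 = (k-2) + 1 := by omega
        rw [hh]; ring
      rw [hpow]
      exact mul_dvd_mul_left 2 hAk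
  -- Claim C : the statement
  have hC : ∀ m : ℕ, (2:ℤ)^(k-1) ∣ L (1 + (m:ℤ)*((k:ℤ)+1)) - (4*(m:ℤ)+1)*(-1)^m := by
    intro m
    induction m with
    | zero => norm_num [hL1]
    | succ p ih =>
      have hBp := hB (p+1)
      have h := key (1 + ((p:ℤ)+1)*((k:ℤ)+1))
      have e1 : 1 + ((p:ℤ)+1)*((k:ℤ)+1) - 1 = ((p+1:ℕ):ℤ)*((k:ℤ)+1) := by push_cast; ring
      have e2 : 1 + ((p:ℤ)+1)*((k:ℤ)+1) - 1 - (k:ℤ) = 1 + (p:ℤ)*((k:ℤ)+1) := by ring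
      rw [e2, e1] at h
      have e3 : 1 + ((p+1:ℕ):ℤ)*((k:ℤ)+1) = 1 + ((p:ℤ)+1)*((k:ℤ)+1) := by push_cast; ring
      rw [e3, h]
      have expand : 2 * L (((p+1:ℕ):ℤ)*((k:ℤ)+1)) - L (1 + (p:ℤ)*((k:ℤ)+1))
            - (4*((p+1:ℕ):ℤ)+1)*(-1:ℤ)^(p+1)
          = 2 * (L (((p+1:ℕ):ℤ)*((k:ℤ)+1)) - 2*(-1:ℤ)^(p+1))
            - (L (1 + (p:ℤ)*((k:ℤ)+1)) - (4*(p:ℤ)+1)*(-1:ℤ)^p) := by push_cast; ring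
      rw [expand]
      exact dvd_sub (hBp.mul_left 2) ih
  rw [hn]
  exact (Int.ModEq.symm (Int.modEq_iff_dvd.mpr (hC m)))
end

section
/- Let k ≥ 2 and write n = 2 + m(k+1) with m ≥ 0 an integer. Then L_n^{(k)} ≡ (4m² + 6m + 3)·(−1)^m (mod 2^{k}). -/
private lemma c2 (m : ℕ) : 2 * ((m.choose 2 : ℕ) : ℤ) = (m : ℤ) * ((m : ℤ) - 1) := by
  induction m with
  | zero => simp
  | succ i ih =>
    rw [show i + 1 = i.succ from rfl, Nat.choose_succ_succ, Nat.choose_one_right]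
    push_cast
    push_cast at ih
    linarith

private def Gf (m j : ℕ) : ℤ :=
  3 * ((m + j).choose j : ℤ) + 10 * ((m + j).choose (j + 1) : ℤ)
    + 8 * ((m + j).choose (j + 2) : ℤ)

private lemma G0 (m : ℕ) : Gf m 0 = 4 * (m : ℤ) ^ 2 + 6 * (m : ℤ) + 3 := by
  unfold Gf
  simp [Nat.choose_one_right]
  linear_combination 4 * c2 m

private lemma Gbase (j : ℕ) : Gf 0 j = 3 := by
  unfold Gf
  simp [Nat.choose_eq_zero_of_lt (by omega : j < j + 1),
    Nat.choose_eq_zero_of_lt (by omega : j < j + 2)]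

private lemma Gpascal (m j : ℕ) : Gf (m + 1) (j + 1) = Gf (m + 1) j + Gf m (j + 1) := by
  unfold Gf
  rw [show m + 1 + (j + 1) = (m + 1 + j) + 1 from rfl,
      show m + (j + 1) = m + 1 + j from by omega]
  rw [show (j + 1 : ℕ) = Nat.succ j from rfl, show (j + 1 + 1 : ℕ) = Nat.succ (j + 1) from rfl,
      show (j + 1 + 2 : ℕ) = Nat.succ (j + 2) from rfl,
      show (m + 1 + j) + 1 = Nat.succ (m + 1 + j) from rfl]
  rw [Nat.choose_succ_succ, Nat.choose_succ_succ, Nat.choose_succ_succ]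
  push_cast
  ring

private lemma Gpascal0 (m : ℕ) : Gf (m + 1) 0 = 2 * (4 * (m : ℤ) + 5) + Gf m 0 := by
  rw [G0, G0]; push_cast; ring

theorem stmt_8 (k : ℕ) (hk : 2 ≤ k) (L : ℤ → ℤ)
    (hL0 : L 0 = 2) (hL1 : L 1 = 1)
    (hLneg : ∀ n : ℤ, 2 - (k : ℤ) ≤ n → n ≤ -1 → L n = 0)
    (hLrec : ∀ n : ℤ, L n = ∑ i ∈ Finset.range k, L (n - 1 - (i : ℤ)))
    (m : ℕ) (n : ℤ) (hn : n = 2 + (m : ℤ) * ((k : ℤ) + 1)) :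
    L n ≡ (4 * (m : ℤ) ^ 2 + 6 * (m : ℤ) + 3) * (-1) ^ m [ZMOD 2 ^ k] := by
  obtain ⟨p, rfl⟩ : ∃ p, k = p + 2 := ⟨k - 2, by omega⟩
  -- two-term recurrence
  have hrec2 : ∀ t : ℤ, L (t + 1) = 2 * L t - L (t - ((p : ℤ) + 2)) := by
    intro t
    have h1 := hLrec (t + 1)
    have h2 := hLrec t
    have key : L (t + 1) - L t
        = ∑ i ∈ Finset.range (p + 2), (L (t - (i : ℤ)) - L (t - ((i + 1 : ℕ) : ℤ))) := by
      rw [Finset.sum_sub_distrib]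
      congr 1
      · rw [h1]
        refine Finset.sum_congr rfl fun i _ => ?_
        congr 1
        ring
      · rw [h2]
        refine Finset.sum_congr rfl fun i _ => ?_
        congr 1
        push_cast
        ring
    rw [Finset.sum_range_sub' (fun i => L (t - (i : ℤ)))] at key
    simp only [Nat.cast_zero, sub_zero] at key
    rw [show ((p + 2 : ℕ) : ℤ) = (p : ℤ) + 2 from by push_cast; ring] at key
    linarith
  -- base values
  have hL2 : L 2 = 3 := by
    have h := hLrec 2
    rw [Finset.sum_range_succ', Finset.sum_range_succ'] at h
    have hz : ∀ i ∈ Finset.range p, L (2 - 1 - ((i + 1 + 1 : ℕ) : ℤ)) = 0 := by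
      intro i hi
      simp only [Finset.mem_range] at hi
      apply hLneg <;> push_cast <;> omega
    rw [Finset.sum_congr rfl hz] at h
    simp only [Finset.sum_const_zero, zero_add] at h
    norm_num at h
    rw [h, hL0, hL1]
    ring
  have hbase : ∀ j : ℕ, j ≤ p → L ((j : ℤ) + 2) = 3 * 2 ^ j := by
    intro j
    induction j with
    | zero => intro _; simpa using hL2
    | succ i ih =>
      intro hij
      have h := hrec2 ((i : ℤ) + 2)
      have hz : L ((i : ℤ) + 2 - ((p : ℤ) + 2)) = 0 := by
        apply hLneg <;> push_cast <;> omega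
      have hidx : ((i + 1 : ℕ) : ℤ) + 2 = ((i : ℤ) + 2) + 1 := by push_cast; ring
      rw [hidx, h, hz, ih (by omega)]
      ring
  -- helper step
  have step : ∀ (a b c X Y T : ℤ), L a ≡ X [ZMOD (2 : ℤ) ^ (p + 2)] →
      L c ≡ Y [ZMOD (2 : ℤ) ^ (p + 2)] → b = a + 1 → c = a - ((p : ℤ) + 2) →
      ((2 : ℤ) ^ (p + 2)) ∣ T - (2 * X - Y) → L b ≡ T [ZMOD (2 : ℤ) ^ (p + 2)] := by
    intro a b c X Y T hX hY hb hc hdvd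
    have h : L b = 2 * L a - L c := by rw [hb, hc]; exact hrec2 a
    have h2 : L b ≡ 2 * X - Y [ZMOD (2 : ℤ) ^ (p + 2)] := by
      rw [h]; exact (hX.mul_left 2).sub hY
    exact h2.trans (Int.modEq_iff_dvd.mpr hdvd)
  -- main invariant
  have main : ∀ m : ℕ,
      (L ((m : ℤ) * (((p : ℤ) + 2) + 1)) ≡
        (-1) ^ m * (2 + 2 ^ (p + 1) * (((m + p).choose (p + 1) : ℕ) : ℤ))
          [ZMOD (2 : ℤ) ^ (p + 2)]) ∧
      (L (1 + (m : ℤ) * (((p : ℤ) + 2) + 1)) ≡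
        (-1) ^ m * (1 + 4 * (m : ℤ)) [ZMOD (2 : ℤ) ^ (p + 2)]) ∧
      (∀ j : ℕ, j ≤ p → L ((j : ℤ) + 2 + (m : ℤ) * (((p : ℤ) + 2) + 1)) ≡
        (-1) ^ m * 2 ^ j * Gf m j [ZMOD (2 : ℤ) ^ (p + 2)]) := by
    intro m
    induction m with
    | zero =>
      refine ⟨?_, ?_, ?_⟩
      · simp only [Nat.cast_zero, zero_mul, zero_add, pow_zero, one_mul]
        rw [hL0, Nat.choose_eq_zero_of_lt (by omega : p < p + 1)]
        simp
      · simp only [Nat.cast_zero, zero_mul, add_zero, pow_zero, one_mul]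
        rw [hL1]
        simp
      · intro j hj
        simp only [Nat.cast_zero, zero_mul, add_zero, pow_zero, one_mul]
        rw [hbase j hj, Gbase]
        have : (3 : ℤ) * 2 ^ j = 2 ^ j * 3 := by ring
        rw [this]
    | succ q ih =>
      obtain ⟨h0, h1, h2⟩ := ih
      have h0' : L (((q + 1 : ℕ) : ℤ) * (((p : ℤ) + 2) + 1)) ≡
          (-1) ^ (q + 1) * (2 + 2 ^ (p + 1) * (((q + 1 + p).choose (p + 1) : ℕ) : ℤ))
            [ZMOD (2 : ℤ) ^ (p + 2)] := by
        apply step ((p : ℤ) + 2 + (q : ℤ) * (((p : ℤ) + 2) + 1)) _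
          ((q : ℤ) * (((p : ℤ) + 2) + 1)) _ _ _ (h2 p le_rfl) h0
        · push_cast; ring
        · push_cast; ring
        · have pas : (((q + 1 + p).choose (p + 1) : ℕ) : ℤ)
              = (((q + p).choose p : ℕ) : ℤ) + (((q + p).choose (p + 1) : ℕ) : ℤ) := by
            rw [show q + 1 + p = Nat.succ (q + p) from by omega,
              show (p + 1 : ℕ) = Nat.succ p from rfl, Nat.choose_succ_succ]
            push_cast; ring
          refine ⟨(-1) ^ q * (-(2 * (((q + p).choose p : ℕ) : ℤ))
            - 5 * (((q + p).choose (p + 1) : ℕ) : ℤ)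
            - 4 * (((q + p).choose (p + 2) : ℕ) : ℤ)), ?_⟩
          rw [pas, pow_succ]
          unfold Gf
          ring
      have h1' : L (1 + ((q + 1 : ℕ) : ℤ) * (((p : ℤ) + 2) + 1)) ≡
          (-1) ^ (q + 1) * (1 + 4 * ((q + 1 : ℕ) : ℤ)) [ZMOD (2 : ℤ) ^ (p + 2)] := by
        apply step (((q + 1 : ℕ) : ℤ) * (((p : ℤ) + 2) + 1)) _
          (1 + (q : ℤ) * (((p : ℤ) + 2) + 1)) _ _ _ h0' h1
        · ring
        · push_cast; ring
        · refine ⟨(-1) ^ q * (((q + 1 + p).choose (p + 1) : ℕ) : ℤ), ?_⟩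
          rw [pow_succ]
          push_cast
          ring
      refine ⟨h0', h1', ?_⟩
      intro j
      induction j with
      | zero =>
        intro _
        apply step (1 + ((q + 1 : ℕ) : ℤ) * (((p : ℤ) + 2) + 1)) _
          ((0 : ℤ) + 2 + (q : ℤ) * (((p : ℤ) + 2) + 1)) _ _ _ h1' (h2 0 (Nat.zero_le p))
        · push_cast; ring
        · push_cast; ring
        · refine ⟨0, ?_⟩
          rw [show q + 1 = Nat.succ q from rfl, Gpascal0, pow_succ]
          push_cast
          ring
      | succ i ihj =>
        intro hij
        apply step ((i : ℤ) + 2 + ((q + 1 : ℕ) : ℤ) * (((p : ℤ) + 2) + 1)) _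
          (((i + 1 : ℕ) : ℤ) + 2 + (q : ℤ) * (((p : ℤ) + 2) + 1)) _ _ _
          (ihj (by omega)) (h2 (i + 1) hij)
        · push_cast; ring
        · push_cast; ring
        · refine ⟨0, ?_⟩
          rw [show q + 1 = Nat.succ q from rfl, show i + 1 = Nat.succ i from rfl, Gpascal,
            pow_succ, pow_succ]
          ring
  -- conclude
  obtain ⟨-, -, hrow⟩ := main m
  have h := hrow 0 (Nat.zero_le p)
  rw [G0] at h
  have hidx : ((0 : ℕ) : ℤ) + 2 + (m : ℤ) * (((p : ℤ) + 2) + 1) = n := by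
    rw [hn]; push_cast; ring
  rw [hidx] at h
  have : (2 : ℤ) ^ (p + 2) = ((2 : ℤ) ^ (p + 2) : ℤ) := rfl
  calc L n ≡ (-1) ^ m * 2 ^ 0 * (4 * (m : ℤ) ^ 2 + 6 * (m : ℤ) + 3) [ZMOD (2 : ℤ) ^ (p + 2)] := h
    _ = (4 * (m : ℤ) ^ 2 + 6 * (m : ℤ) + 3) * (-1) ^ m := by ring
end

section
/- Let k ≥ 2, r an integer with 3 ≤ r ≤ k, and n = r + m(k+1) with m ≥ 0. Then L_n^{(k)} ≡ (−1)^m · 2^{r−2} · [4(C(m+r+1, m) − C(m+r−1, m−2)) − (C(m+r, m) − C(m+r−2, m−2))] (mod 2^{k+r−2}), where C(a,b) denotes the binomial coefficient (taken to be 0 when b < 0 or b > a). -/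
/-- Binomial coefficient on integers, taken to be `0` when the lower index is
negative or exceeds the upper index. -/
def ichoose (a b : ℤ) : ℤ :=
  if 0 ≤ b ∧ b ≤ a then (a.toNat).choose b.toNat else 0

def cc (t : ℤ) (j : ℕ) : ℤ :=
  if 0 ≤ t then ((t.toNat + j).choose j : ℤ) * 2 ^ t.toNat else 0

def uu (k : ℕ) (n : ℤ) : ℤ :=
  ∑ j ∈ Finset.range (n.toNat + 1), (-1) ^ j * cc (n - ((k : ℤ) + 1) * j) j

lemma cc_neg {t : ℤ} (h : t < 0) (j : ℕ) : cc t j = 0 := by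
  simp [cc, not_le.mpr h]

lemma cc_zero (t : ℤ) : cc t 0 = if 0 ≤ t then 2 ^ t.toNat else 0 := by
  simp [cc]

lemma cc_rec (t : ℤ) (j : ℕ) : cc t (j + 1) = 2 * cc (t - 1) (j + 1) + cc t j := by
  rcases lt_trichotomy t 0 with h | h | h
  · rw [cc_neg h, cc_neg (by omega) , cc_neg h]; ring
  · subst h
    rw [cc_neg (show (0:ℤ) - 1 < 0 by norm_num)]
    simp [cc]
  · have ht : (0:ℤ) ≤ t := le_of_lt h
    have ht1 : (0:ℤ) ≤ t - 1 := by omega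
    obtain ⟨a, ha⟩ : ∃ a : ℕ, t = (a : ℤ) + 1 := ⟨(t-1).toNat, by omega⟩
    subst ha
    rw [cc, cc, cc, if_pos ht, if_pos ht1, if_pos ht]
    have h1 : ((a:ℤ) + 1).toNat = a + 1 := by omega
    have h2 : ((a:ℤ) + 1 - 1).toNat = a := by omega
    rw [h1, h2]
    rw [show a + 1 + (j+1) = (a + (j+1)) + 1 by omega, Nat.choose_succ_succ' (a + (j+1)) j]
    push_cast
    rw [show a + 1 + j = a + (j+1) by omega]
    ring

lemma uu_ext (k : ℕ) (n : ℤ) (N : ℕ) (hN : n.toNat + 1 ≤ N) :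
    uu k n = ∑ j ∈ Finset.range N, (-1) ^ j * cc (n - ((k : ℤ) + 1) * j) j := by
  rw [uu]
  apply Finset.sum_subset (Finset.range_subset_range.mpr hN)
  intro j hj hnj
  simp only [Finset.mem_range, not_lt] at hj hnj
  have h1 : n - ((k : ℤ) + 1) * j < 0 := by
    have : (j : ℤ) ≤ ((k:ℤ)+1) * j := by nlinarith [Int.ofNat_nonneg j, Int.ofNat_nonneg k]
    have h2 : n ≤ (n.toNat : ℤ) := Int.self_le_toNat n
    have h3 : (n.toNat : ℤ) + 1 ≤ (j : ℤ) := by exact_mod_cast hnj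
    omega
  rw [cc_neg h1]; ring

lemma uu_neg (k : ℕ) (n : ℤ) (h : n < 0) : uu k n = 0 := by
  rw [uu]
  apply Finset.sum_eq_zero
  intro j _
  have h1 : n - ((k : ℤ) + 1) * j < 0 := by
    have : (0:ℤ) ≤ ((k:ℤ)+1) * j := by positivity
    omega
  rw [cc_neg h1]; ring

lemma uu_small (k : ℕ) (n : ℤ) (h0 : 0 ≤ n) (hk : n ≤ k) : uu k n = 2 ^ n.toNat := by
  rw [uu, Finset.sum_range_succ']
  push_cast
  have h1 : ∀ j ∈ Finset.range n.toNat,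
      (-1 : ℤ) ^ (j+1) * cc (n - ((k : ℤ) + 1) * ((j:ℤ)+1)) (j+1) = 0 := by
    intro j _
    have : n - ((k : ℤ) + 1) * (j+1) < 0 := by
      have : ((k:ℤ)+1) ≤ ((k:ℤ)+1) * (j+1) := by
        nlinarith [Int.ofNat_nonneg j, Int.ofNat_nonneg k]
      omega
    rw [cc_neg this]; ring
  rw [Finset.sum_congr rfl h1]
  simp [cc, h0]

lemma uu_rec (k : ℕ) (n : ℤ) (h : 1 ≤ n) :
    uu k n = 2 * uu k (n - 1) - uu k (n - 1 - k) := by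
  set K : ℤ := (k : ℤ) + 1 with hK
  set N : ℕ := n.toNat with hN
  have hA : uu k n = ∑ j ∈ Finset.range (N+1), (-1) ^ j * cc (n - K * j) j := rfl
  have hB : uu k (n-1) = ∑ j ∈ Finset.range (N+1), (-1) ^ j * cc (n - 1 - K * j) j :=
    uu_ext k (n-1) (N+1) (by omega)
  have hC : uu k (n-1-k) = ∑ j ∈ Finset.range (N+1),
      (-1) ^ j * cc (n - 1 - k - K * j) j :=
    uu_ext k (n-1-k) (N+1) (by omega)
  have key : ∑ j ∈ Finset.range (N+1),
      ((-1 : ℤ) ^ j * cc (n - K * j) j - 2 * ((-1) ^ j * cc (n - 1 - K * j) j)) =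
      - ∑ j ∈ Finset.range (N+1), (-1) ^ j * cc (n - 1 - k - K * j) j := by
    rw [Finset.sum_range_succ', Finset.sum_range_succ]
    have h0 : ((-1 : ℤ) ^ 0 * cc (n - K * (0:ℕ)) 0 -
        2 * ((-1) ^ 0 * cc (n - 1 - K * (0:ℕ)) 0)) = 0 := by
      have e1 : n - K * ((0:ℕ):ℤ) = n := by push_cast; ring
      have e2 : n - 1 - K * ((0:ℕ):ℤ) = n - 1 := by push_cast; ring
      rw [e1, e2]
      simp only [pow_zero, one_mul, cc, if_pos (by omega : (0:ℤ) ≤ n),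
        if_pos (by omega : (0:ℤ) ≤ n - 1)]
      have : n.toNat = (n-1).toNat + 1 := by omega
      rw [this]
      simp [Nat.choose_zero_right]
      ring
    have hlast : (-1 : ℤ) ^ N * cc (n - 1 - k - K * (N:ℤ)) N = 0 := by
      have ht : n - 1 - k - K * (N:ℤ) < 0 := by
        have h1 : n ≤ (N:ℤ) := by omega
        have h2 : (0:ℤ) ≤ (k:ℤ) * N := by positivity
        have : K * (N:ℤ) = (k:ℤ) * N + N := by rw [hK]; ring
        omega
      rw [cc_neg ht]; ring
    rw [h0, hlast, add_zero, add_zero]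
    rw [← Finset.sum_neg_distrib]
    apply Finset.sum_congr rfl
    intro j _
    have e1 : n - 1 - (k:ℤ) - K * (j:ℤ) = n - K * ((j:ℤ)+1) := by rw [hK]; ring
    have e2 : n - K * ((j+1 : ℕ):ℤ) = n - K * ((j:ℤ)+1) := by push_cast; ring
    have e3 : n - 1 - K * ((j+1 : ℕ):ℤ) = (n - K * ((j:ℤ)+1)) - 1 := by push_cast; ring
    rw [e2, e3, e1, cc_rec (n - K * ((j:ℤ)+1)) j, pow_succ]
    ring
  rw [hA, hB, hC]
  rw [Finset.sum_sub_distrib] at key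
  rw [← Finset.mul_sum] at key
  linarith [key]

lemma cc_dvd (Km : ℕ) (t : ℤ) (ht : (Km : ℤ) ≤ t) (j : ℕ) : (2:ℤ) ^ Km ∣ cc t j := by
  have h0 : (0:ℤ) ≤ t := le_trans (by positivity) ht
  rw [cc, if_pos h0]
  have : Km ≤ t.toNat := by omega
  exact Dvd.dvd.mul_left (pow_dvd_pow 2 this) _

lemma uu_key (k : ℕ) (Km a m : ℕ) (hak : a ≤ k) (hKm : Km ≤ a + k + 1) :
    (2:ℤ) ^ Km ∣ uu k ((a:ℤ) + m * ((k:ℤ)+1)) - (-1)^m * ((a+m).choose m) * 2^a := by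
  set n : ℤ := (a:ℤ) + m * ((k:ℤ)+1) with hn
  have hN : n.toNat = a + m * (k+1) := by
    have : n = ((a + m * (k+1) : ℕ) : ℤ) := by push_cast; ring
    rw [this, Int.toNat_natCast]
  have hmem : m ∈ Finset.range (n.toNat + 1) := by
    rw [Finset.mem_range, hN]
    nlinarith
  have hfm : (-1:ℤ)^m * cc (n - ((k:ℤ)+1) * m) m = (-1)^m * ((a+m).choose m) * 2^a := by
    have e : n - ((k:ℤ)+1) * m = (a:ℤ) := by rw [hn]; ring
    rw [e, cc, if_pos (by positivity : (0:ℤ) ≤ (a:ℤ)), Int.toNat_natCast]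
    ring
  rw [uu, ← Finset.sum_erase_add _ _ hmem, hfm, add_sub_cancel_right]
  apply Finset.dvd_sum
  intro j hj
  rw [Finset.mem_erase, Finset.mem_range] at hj
  rcases lt_or_gt_of_ne hj.1 with hjm | hjm
  · -- j < m : deep term, divisible
    have ht : (Km : ℤ) ≤ n - ((k:ℤ)+1) * j := by
      have h1 : ((k:ℤ)+1) * j + ((k:ℤ)+1) ≤ ((k:ℤ)+1) * m := by
        have : (j:ℤ) + 1 ≤ (m:ℤ) := by exact_mod_cast hjm
        nlinarith [Int.ofNat_nonneg k]
      have h2 : (Km:ℤ) ≤ (a:ℤ) + k + 1 := by exact_mod_cast hKm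
      have hne : n = (a:ℤ) + ((k:ℤ)+1) * m := by rw [hn]; ring
      omega
    exact Dvd.dvd.mul_left (cc_dvd Km _ ht j) _
  · -- j > m : term is zero
    have ht : n - ((k:ℤ)+1) * j < 0 := by
      have h1 : ((k:ℤ)+1) * m + ((k:ℤ)+1) ≤ ((k:ℤ)+1) * j := by
        have : (m:ℤ) + 1 ≤ (j:ℤ) := by exact_mod_cast hjm
        nlinarith [Int.ofNat_nonneg k]
      have h2 : (a:ℤ) ≤ (k:ℤ) := by exact_mod_cast hak
      have hne : n = (a:ℤ) + ((k:ℤ)+1) * m := by rw [hn]; ring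
      omega
    rw [cc_neg ht]
    exact Dvd.dvd.mul_left (dvd_zero _) _

lemma key_ident (μ ρ : ℕ) :
    4 * (((μ+ρ+6).choose (μ+2) : ℤ) - ((μ+ρ+4).choose μ : ℤ))
      - (((μ+ρ+5).choose (μ+2) : ℤ) - ((μ+ρ+3).choose μ : ℤ))
    = 8 * (((μ+ρ+5).choose (μ+2)) : ℤ) - 6 * (((μ+ρ+4).choose (μ+2)) : ℤ)
      + (((μ+ρ+3).choose (μ+2)) : ℤ) := by
  have p1 : (μ+ρ+6).choose (μ+2) = (μ+ρ+5).choose (μ+1) + (μ+ρ+5).choose (μ+2) := by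
    rw [show μ+ρ+6 = (μ+ρ+5)+1 by omega]
    exact Nat.choose_succ_succ' _ _
  have p2 : (μ+ρ+5).choose (μ+1) = (μ+ρ+4).choose μ + (μ+ρ+4).choose (μ+1) := by
    rw [show μ+ρ+5 = (μ+ρ+4)+1 by omega]
    exact Nat.choose_succ_succ' _ _
  have p3 : (μ+ρ+5).choose (μ+2) = (μ+ρ+4).choose (μ+1) + (μ+ρ+4).choose (μ+2) := by
    rw [show μ+ρ+5 = (μ+ρ+4)+1 by omega]
    exact Nat.choose_succ_succ' _ _
  have p4 : (μ+ρ+4).choose (μ+1) = (μ+ρ+3).choose μ + (μ+ρ+3).choose (μ+1) := by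
    rw [show μ+ρ+4 = (μ+ρ+3)+1 by omega]
    exact Nat.choose_succ_succ' _ _
  have p5 : (μ+ρ+4).choose (μ+2) = (μ+ρ+3).choose (μ+1) + (μ+ρ+3).choose (μ+2) := by
    rw [show μ+ρ+4 = (μ+ρ+3)+1 by omega]
    exact Nat.choose_succ_succ' _ _
  zify at p1 p2 p3 p4 p5
  linarith [p1, p2, p3, p4, p5]

lemma ichoose_coe (x y : ℕ) (h : y ≤ x) : ichoose (x:ℤ) (y:ℤ) = (x.choose y : ℤ) := by
  rw [ichoose, if_pos ⟨by positivity, by exact_mod_cast h⟩, Int.toNat_natCast, Int.toNat_natCast]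

lemma ichoose_negb (a b : ℤ) (h : b < 0) : ichoose a b = 0 := by
  rw [ichoose, if_neg]; omega

theorem stmt_9 (k : ℕ) (hk : 2 ≤ k) (L : ℤ → ℤ)
    (hL0 : L 0 = 2) (hL1 : L 1 = 1)
    (hLneg : ∀ n : ℤ, 2 - (k : ℤ) ≤ n → n ≤ -1 → L n = 0)
    (hLrec : ∀ n : ℤ, L n = ∑ i ∈ Finset.range k, L (n - 1 - (i : ℤ)))
    (r : ℕ) (hr3 : 3 ≤ r) (hrk : r ≤ k)
    (m : ℕ) (n : ℤ) (hn : n = (r : ℤ) + (m : ℤ) * ((k : ℤ) + 1)) :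
    L n ≡ (-1) ^ m * 2 ^ (r - 2) *
        (4 * (ichoose ((m : ℤ) + r + 1) m - ichoose ((m : ℤ) + r - 1) ((m : ℤ) - 2)) -
          (ichoose ((m : ℤ) + r) m - ichoose ((m : ℤ) + r - 2) ((m : ℤ) - 2)))
      [ZMOD 2 ^ (k + r - 2)] := by
  obtain ⟨p, rfl⟩ : ∃ p, k = p + 2 := ⟨k - 2, by omega⟩
  set k := p + 2 with hkdef
  -- two-term recurrence
  have Ltwo : ∀ x : ℤ, L (x + 1) = 2 * L x - L (x - k) := by
    intro x
    have h1 : L (x+1) = ∑ i ∈ Finset.range k, L (x - i) := by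
      rw [hLrec (x+1)]
      refine Finset.sum_congr rfl (fun i _ => ?_)
      rw [show x + 1 - 1 - (i:ℤ) = x - i by ring]
    have h2 := hLrec x
    rw [Finset.sum_range_succ'] at h1
    rw [Finset.sum_range_succ] at h2
    -- h1 : L (x+1) = ∑ i in range (p+1), L (x - (i+1)) + L (x - 0)
    -- h2 : L x = ∑ i in range (p+1), L (x - 1 - i) + L (x - 1 - (p+1))
    have e0 : ∀ i : ℕ, x - ((i+1 : ℕ) : ℤ) = x - 1 - (i : ℤ) := by
      intro i; push_cast; ring
    simp only [e0] at h1
    have e1 : x - 1 - ((p+1 : ℕ) : ℤ) = x - k := by push_cast [hkdef]; ring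
    rw [e1] at h2
    have e2 : x - ((0:ℕ):ℤ) = x := by norm_num
    rw [e2] at h1
    omega
  -- value of L (1 - k)
  have hL1k : L (1 - (k:ℤ)) = -1 := by
    have h := hLrec 1
    rw [Finset.sum_range_succ, Finset.sum_range_succ'] at h
    have e0 : ∀ i : ℕ, (1:ℤ) - 1 - ((i+1 : ℕ) : ℤ) = -(i+1) := by intro i; push_cast; ring
    simp only [e0] at h
    have hz : ∀ i ∈ Finset.range p, L (-((i:ℤ)+1)) = 0 := by
      intro i hi
      rw [Finset.mem_range] at hi
      apply hLneg <;> push_cast [hkdef] <;> omega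
    rw [Finset.sum_congr rfl hz] at h
    rw [show -(((p:ℕ):ℤ) + 1) = 1 - (k:ℤ) by push_cast [hkdef]; ring] at h
    simp only [Finset.sum_const_zero, hL0, hL1] at h
    norm_num at h
    omega
  -- main closed form
  have main : ∀ N : ℕ, L N = 2 * uu k N - 3 * uu k ((N:ℤ) - 1) + uu k ((N:ℤ) - 2) := by
    intro N
    induction N using Nat.strong_induction_on with
    | _ N ih =>
      match N with
      | 0 =>
        rw [show ((0:ℕ):ℤ) = 0 by norm_num, hL0, uu_small k 0 le_rfl (by positivity),
          uu_neg k (0-1) (by norm_num), uu_neg k (0-2) (by norm_num)]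
        norm_num
      | 1 =>
        rw [show ((1:ℕ):ℤ) = 1 by norm_num, hL1, uu_small k 1 (by norm_num) (by push_cast; omega),
          show (1:ℤ)-1 = 0 by ring, uu_small k 0 le_rfl (by positivity),
          uu_neg k (1-2) (by norm_num)]
        norm_num
      | 2 =>
        have h2 : L 2 = 2 * L 1 - L (1 - k) := by
          have := Ltwo 1; rw [show (1:ℤ) - k = 1 - k by ring] at this; exact this
        rw [show ((2:ℕ):ℤ) = 2 by norm_num, h2, hL1, hL1k,
          uu_small k 2 (by norm_num) (by push_cast; omega),
          show (2:ℤ)-1 = 1 by ring, uu_small k 1 (by norm_num) (by push_cast; omega),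
          show (2:ℤ)-2 = 0 by ring, uu_small k 0 le_rfl (by positivity)]
        decide
      | (N+3) =>
        have hx := Ltwo ((N:ℤ) + 2)
        have ih2 := ih (N+2) (by omega)
        have hL22 : L ((N:ℤ)+2-k) = 2 * uu k ((N:ℤ)+2-k) - 3 * uu k ((N:ℤ)+1-k)
            + uu k ((N:ℤ)-k) := by
          by_cases hc : k ≤ N + 2
          · obtain ⟨M, hM⟩ : ∃ M : ℕ, (M:ℤ) = (N:ℤ)+2-k := ⟨N+2-k, by push_cast; omega⟩
            have ihM := ih M (by omega)
            rw [← hM, show (N:ℤ)+1-k = (M:ℤ)-1 by omega, show (N:ℤ)-k = (M:ℤ)-2 by omega]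
            exact ihM
          · push_neg at hc
            rw [hLneg _ (by push_cast [hkdef]; omega) (by push_cast [hkdef]; omega),
              uu_neg k _ (by push_cast [hkdef]; omega), uu_neg k _ (by push_cast [hkdef]; omega),
              uu_neg k _ (by push_cast [hkdef]; omega)]
            ring
        have u3 : uu k ((N:ℤ)+3) = 2 * uu k ((N:ℤ)+2) - uu k ((N:ℤ)+2-(k:ℤ)) := by
          have h := uu_rec k ((N:ℤ)+3) (by omega)
          rw [show (N:ℤ)+3-1-(k:ℤ) = (N:ℤ)+2-(k:ℤ) by ring,
            show (N:ℤ)+3-1 = (N:ℤ)+2 by ring] at h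
          exact h
        have u2 : uu k ((N:ℤ)+2) = 2 * uu k ((N:ℤ)+1) - uu k ((N:ℤ)+1-(k:ℤ)) := by
          have h := uu_rec k ((N:ℤ)+2) (by omega)
          rw [show (N:ℤ)+2-1-(k:ℤ) = (N:ℤ)+1-(k:ℤ) by ring,
            show (N:ℤ)+2-1 = (N:ℤ)+1 by ring] at h
          exact h
        have u1 : uu k ((N:ℤ)+1) = 2 * uu k ((N:ℤ)) - uu k ((N:ℤ)-(k:ℤ)) := by
          have h := uu_rec k ((N:ℤ)+1) (by omega)
          rw [show (N:ℤ)+1-1-(k:ℤ) = (N:ℤ)-(k:ℤ) by ring,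
            show (N:ℤ)+1-1 = (N:ℤ) by ring] at h
          exact h
        have c1 : ((N+3:ℕ):ℤ) = (N:ℤ)+3 := by push_cast; ring
        have c2 : ((N+2:ℕ):ℤ) = (N:ℤ)+2 := by push_cast; ring
        rw [c2, show (N:ℤ)+2-1 = (N:ℤ)+1 by ring, show (N:ℤ)+2-2 = (N:ℤ) by ring] at ih2
        rw [show (N:ℤ)+2+1 = (N:ℤ)+3 by ring] at hx
        rw [c1, show (N:ℤ)+3-1 = (N:ℤ)+2 by ring, show (N:ℤ)+3-2 = (N:ℤ)+1 by ring]
        linarith [hx, ih2, hL22, u3, u2, u1]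
  -- final assembly
  obtain ⟨e, rfl⟩ : ∃ e, r = e + 3 := ⟨r - 3, by omega⟩
  set r := e + 3 with hrdef
  set Km := k + r - 2 with hKmdef
  set Nn := r + m * (k+1) with hNn
  have hnN : n = ((Nn : ℕ) : ℤ) := by rw [hn, hNn]; push_cast; ring
  have hLn := main Nn
  have d0 := uu_key k Km r m hrk (by omega)
  have d1 := uu_key k Km (r-1) m (by omega) (by omega)
  have d2 := uu_key k Km (r-2) m (by omega) (by omega)
  have a0 : ((r:ℕ):ℤ) + m * ((k:ℤ)+1) = ((Nn : ℕ):ℤ) := by rw [hNn]; push_cast; ring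
  have a1 : (((r-1:ℕ)):ℤ) + m * ((k:ℤ)+1) = ((Nn : ℕ):ℤ) - 1 := by
    rw [hNn, show ((r-1:ℕ):ℤ) = (r:ℤ) - 1 by push_cast [hrdef]; ring]
    push_cast; ring
  have a2 : (((r-2:ℕ)):ℤ) + m * ((k:ℤ)+1) = ((Nn : ℕ):ℤ) - 2 := by
    rw [hNn, show ((r-2:ℕ):ℤ) = (r:ℤ) - 2 by push_cast [hrdef]; ring]
    push_cast; ring
  rw [a0] at d0
  rw [a1] at d1
  rw [a2] at d2
  set T0 : ℤ := (-1)^m * ((r+m).choose m) * 2^r with hT0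
  set T1 : ℤ := (-1)^m * (((r-1)+m).choose m) * 2^(r-1) with hT1
  set T2 : ℤ := (-1)^m * (((r-2)+m).choose m) * 2^(r-2) with hT2
  have hD : (2:ℤ)^Km ∣ L n - (2*T0 - 3*T1 + T2) := by
    obtain ⟨c0, hc0⟩ := d0
    obtain ⟨c1, hc1⟩ := d1
    obtain ⟨c2, hc2⟩ := d2
    refine ⟨2*c0 - 3*c1 + c2, ?_⟩
    rw [hnN, hLn]
    linarith [hc0, hc1, hc2]
  have hRE : (-1:ℤ) ^ m * 2 ^ (r - 2) *
        (4 * (ichoose ((m : ℤ) + r + 1) m - ichoose ((m : ℤ) + r - 1) ((m : ℤ) - 2)) -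
          (ichoose ((m : ℤ) + r) m - ichoose ((m : ℤ) + r - 2) ((m : ℤ) - 2)))
      = 2*T0 - 3*T1 + T2 := by
    rw [hT0, hT1, hT2, hrdef]
    rw [show (e+3) - 1 = e + 2 by omega, show (e+3) - 2 = e + 1 by omega]
    match m with
    | 0 =>
      rw [ichoose_negb (((0:ℕ):ℤ) + ((e+3:ℕ):ℤ) - 1) (((0:ℕ):ℤ) - 2) (by norm_num),
        ichoose_negb (((0:ℕ):ℤ) + ((e+3:ℕ):ℤ) - 2) (((0:ℕ):ℤ) - 2) (by norm_num)]
      rw [show ((0:ℕ):ℤ) + (e+3:ℕ) + 1 = (((e+4 : ℕ)):ℤ) by push_cast; ring,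
        show ((0:ℕ):ℤ) + (e+3:ℕ) = (((e+3 : ℕ)):ℤ) by push_cast; ring]
      rw [ichoose_coe (e+4) 0 (by omega), ichoose_coe (e+3) 0 (by omega)]
      simp [Nat.choose_zero_right]
      rw [show e + 3 = (e+1) + 2 by omega, pow_add, pow_add]
      ring
    | 1 =>
      rw [ichoose_negb (((1:ℕ):ℤ) + ((e+3:ℕ):ℤ) - 1) (((1:ℕ):ℤ) - 2) (by norm_num),
        ichoose_negb (((1:ℕ):ℤ) + ((e+3:ℕ):ℤ) - 2) (((1:ℕ):ℤ) - 2) (by norm_num)]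
      rw [show ((1:ℕ):ℤ) + (e+3:ℕ) + 1 = (((e+5 : ℕ)):ℤ) by push_cast; ring,
        show ((1:ℕ):ℤ) + (e+3:ℕ) = (((e+4 : ℕ)):ℤ) by push_cast; ring]
      rw [ichoose_coe (e+5) 1 (by omega), ichoose_coe (e+4) 1 (by omega)]
      simp [Nat.choose_one_right]
      rw [show e + 3 = (e+1) + 2 by omega, pow_add, pow_add]
      push_cast
      ring
    | (μ+2) =>
      rw [show ((μ+2:ℕ):ℤ) + (e+3:ℕ) + 1 = (((μ+e+6 : ℕ)):ℤ) by push_cast; ring,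
        show ((μ+2:ℕ):ℤ) + (e+3:ℕ) - 1 = (((μ+e+4 : ℕ)):ℤ) by push_cast; ring,
        show ((μ+2:ℕ):ℤ) + (e+3:ℕ) - 2 = (((μ+e+3 : ℕ)):ℤ) by push_cast; ring,
        show ((μ+2:ℕ):ℤ) + (e+3:ℕ) = (((μ+e+5 : ℕ)):ℤ) by push_cast; ring,
        show ((μ+2:ℕ):ℤ) - 2 = ((μ:ℕ):ℤ) by push_cast; ring]
      rw [ichoose_coe (μ+e+6) (μ+2) (by omega), ichoose_coe (μ+e+4) μ (by omega),
        ichoose_coe (μ+e+5) (μ+2) (by omega), ichoose_coe (μ+e+3) μ (by omega)]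
      have hki := key_ident μ e
      rw [show (e+3) + (μ+2) = μ+e+5 by omega, show (e+2) + (μ+2) = μ+e+4 by omega,
        show (e+1) + (μ+2) = μ+e+3 by omega]
      linear_combination ((-1:ℤ)^(μ+2) * 2^(e+1)) * hki
  rw [Int.ModEq]
  have : (-1:ℤ) ^ m * 2 ^ (r - 2) *
        (4 * (ichoose ((m : ℤ) + r + 1) m - ichoose ((m : ℤ) + r - 1) ((m : ℤ) - 2)) -
          (ichoose ((m : ℤ) + r) m - ichoose ((m : ℤ) + r - 2) ((m : ℤ) - 2)))
      - L n = -(L n - (2*T0 - 3*T1 + T2)) := by rw [hRE]; ring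
  have hdvd : (2:ℤ)^Km ∣ (-1:ℤ) ^ m * 2 ^ (r - 2) *
        (4 * (ichoose ((m : ℤ) + r + 1) m - ichoose ((m : ℤ) + r - 1) ((m : ℤ) - 2)) -
          (ichoose ((m : ℤ) + r) m - ichoose ((m : ℤ) + r - 2) ((m : ℤ) - 2)))
      - L n := by rw [this]; exact dvd_neg.mpr hD
  exact (Int.modEq_iff_dvd.mpr hdvd)
end

section
/- For all integers n ≥ 2 and k ≥ 2, L_n^{(k)} = 3·2^{n-2} + Σ_{j=1}^{⌊(n+1+k)/(k+1)⌋−1} 4·C_{n+1,j}·2^{n−j(k+1)−2} − Σ_{j=1}^{⌊(n+k)/(k+1)⌋−1} C_{n,j}·2^{n−j(k+1)−2}, where C_{n,j} := (−1)^j ( C(n−jk, j) − C(n−jk−2, j−2) ) with binomial coefficients taken to be 0 when out of range. -/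
/-- The coefficient `C_{n,j} = (-1)^j (binom(n-jk, j) - binom(n-jk-2, j-2))`. -/
def Cnj (k n j : ℕ) : ℤ :=
  (-1) ^ j * (ichoose ((n : ℤ) - (j : ℤ) * k) j - ichoose ((n : ℤ) - (j : ℤ) * k - 2) ((j : ℤ) - 2))

lemma ichoose_of_neg {a b : ℤ} (h : b < 0) : ichoose a b = 0 := by
  unfold ichoose; rw [if_neg]; omega

lemma ichoose_of_lt {a b : ℤ} (h : a < b) : ichoose a b = 0 := by
  unfold ichoose; rw [if_neg]; omega

lemma ichoose_zero {a : ℤ} (h : 0 ≤ a) : ichoose a 0 = 1 := by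
  unfold ichoose; rw [if_pos ⟨le_refl 0, h⟩]; simp

lemma ichoose_self {a : ℤ} (h : 0 ≤ a) : ichoose a a = 1 := by
  unfold ichoose; rw [if_pos ⟨h, le_refl a⟩, Nat.choose_self]; norm_num

lemma ichoose_one {a : ℤ} (h : 0 ≤ a) : ichoose a 1 = a := by
  unfold ichoose
  rcases eq_or_lt_of_le h with h0 | h0
  · rw [if_neg (by omega)]; omega
  · rw [if_pos ⟨by norm_num, by omega⟩]
    simp [Nat.choose_one_right]; omega

lemma ichoose_pascal {a b : ℤ} (h : ¬(a = -1 ∧ b = 0)) :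
    ichoose (a + 1) b = ichoose a b + ichoose a (b - 1) := by
  unfold ichoose
  split_ifs with h1 h2 h3 h2 h3 h3 <;> try omega
  · -- all in range : 1 ≤ b ≤ a
    rw [show (a + 1).toNat = a.toNat + 1 by omega, show b.toNat = (b - 1).toNat + 1 by omega,
      Nat.choose_succ_succ]
    rw [show (b - 1).toNat.succ = b.toNat by omega, Nat.cast_add, add_comm,
      show (b - 1).toNat + 1 = b.toNat by omega]
  · -- b = 0 case, a ≥ 0
    rw [show b.toNat = 0 by omega]; simp
  · -- b = a + 1, a ≥ 0
    rw [show b.toNat = (a + 1).toNat by omega, Nat.choose_self,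
      show (b - 1).toNat = a.toNat by omega, Nat.choose_self]
    norm_num

lemma Cnj_zero (k m : ℕ) : Cnj k m 0 = 1 := by
  unfold Cnj
  simp only [Nat.cast_zero, pow_zero, zero_mul, sub_zero, one_mul, zero_sub]
  rw [ichoose_of_neg (show (-2:ℤ) < 0 by norm_num), ichoose_zero (by positivity)]
  ring

lemma Cnj_one (k m : ℕ) (h : k ≤ m) : Cnj k m 1 = -((m : ℤ) - k) := by
  have h' : (0:ℤ) ≤ (m:ℤ) - (k:ℤ) := by omega
  unfold Cnj
  simp only [Nat.cast_one, pow_one, one_mul]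
  rw [ichoose_of_neg (show (1:ℤ) - 2 < 0 by norm_num), ichoose_one h']
  ring

lemma Cnj_vanish (k m j : ℕ) (hj : 1 ≤ j) (hm : m ≤ j * (k + 1))
    (hne : ¬(j = 1 ∧ m = k + 1)) : Cnj k m j = 0 := by
  unfold Cnj
  rcases eq_or_lt_of_le hm with he | hl
  · have hj2 : 2 ≤ j := by
      rcases Nat.eq_or_lt_of_le hj with h1 | h1
      · rw [← h1] at he
        exact absurd ⟨h1.symm, by omega⟩ hne
      · omega
    rw [show (m:ℤ) - (j:ℤ) * k = (j:ℤ) by push_cast [he]; ring,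
      ichoose_self (by positivity), ichoose_self (by omega : (0:ℤ) ≤ (j:ℤ) - 2)]
    simp
  · have hz : (m:ℤ) < (j:ℤ) * ((k:ℤ) + 1) := by exact_mod_cast hl
    have hr : (j:ℤ) * ((k:ℤ) + 1) = (j:ℤ) * k + j := by ring
    rw [ichoose_of_lt (by linarith), ichoose_of_lt (by linarith)]
    simp

lemma Cnj_key (k m j : ℕ) (hk : 2 ≤ k) (hm : k ≤ m) (hj : 1 ≤ j) :
    Cnj k (m + 1) j = Cnj k m j - Cnj k (m - k) (j - 1)
      - (if m = 2 * k + 1 ∧ j = 2 then 1 else 0) := by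
  by_cases hbad : m = 2 * k + 1 ∧ j = 2
  · obtain ⟨hm2, hj2⟩ := hbad
    subst hm2; subst hj2
    rw [if_pos ⟨rfl, rfl⟩]
    rw [Cnj_vanish k (2 * k + 1 + 1) 2 (by omega) (by omega) (by omega),
      Cnj_vanish k (2 * k + 1) 2 (by omega) (by omega) (by omega),
      show 2 * k + 1 - k = k + 1 by omega, show 2 - 1 = 1 from rfl,
      Cnj_one k (k + 1) (by omega)]
    push_cast; ring
  · rw [if_neg hbad]
    obtain ⟨i, rfl⟩ : ∃ i, j = i + 1 := ⟨j - 1, by omega⟩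
    have hmk : ((m - k : ℕ) : ℤ) = (m : ℤ) - (k : ℤ) := by omega
    unfold Cnj
    rw [Nat.add_sub_cancel]
    rw [show (((m + 1 : ℕ) : ℤ) - ((i + 1 : ℕ) : ℤ) * (k : ℤ))
          = ((m : ℤ) - ((i : ℤ) + 1) * (k : ℤ)) + 1 by push_cast; ring]
    rw [show ((m : ℤ) - ((i : ℤ) + 1) * (k : ℤ)) + 1 - 2
          = ((m : ℤ) - ((i : ℤ) + 1) * (k : ℤ) - 2) + 1 by ring]
    rw [show ((m : ℕ) : ℤ) - ((i + 1 : ℕ) : ℤ) * (k : ℤ)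
          = (m : ℤ) - ((i : ℤ) + 1) * (k : ℤ) by push_cast; ring]
    rw [show ((m - k : ℕ) : ℤ) - ((i : ℕ) : ℤ) * (k : ℤ)
          = (m : ℤ) - ((i : ℤ) + 1) * (k : ℤ) by rw [hmk]; ring]
    rw [show (((i + 1 : ℕ) : ℤ)) = (i : ℤ) + 1 by push_cast; ring]
    have hp1 := ichoose_pascal (a := (m : ℤ) - ((i : ℤ) + 1) * (k : ℤ)) (b := (i : ℤ) + 1)
      (by rintro ⟨-, h⟩; omega)
    have hp2 : ichoose (((m : ℤ) - ((i : ℤ) + 1) * (k : ℤ) - 2) + 1) ((i : ℤ) + 1 - 2)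
        = ichoose ((m : ℤ) - ((i : ℤ) + 1) * (k : ℤ) - 2) ((i : ℤ) + 1 - 2)
          + ichoose ((m : ℤ) - ((i : ℤ) + 1) * (k : ℤ) - 2) ((i : ℤ) + 1 - 2 - 1) := by
      apply ichoose_pascal
      rintro ⟨h1, h2⟩
      have hi : i = 1 := by omega
      subst hi
      exact hbad ⟨by push_cast at h1; omega, rfl⟩
    rw [hp1, hp2]
    rw [show ((i : ℤ) + 1 - 1) = (i : ℤ) by ring,
      show ((i : ℤ) + 1 - 2) = (i : ℤ) - 1 by ring,
      show ((i : ℤ) - 1 - 1) = (i : ℤ) - 2 by ring]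
    ring

def Sfun (k m : ℕ) (e : ℤ) : ℚ :=
  ∑ j ∈ Finset.Icc 1 ((m + k) / (k + 1) - 1), (Cnj k m j : ℚ) * 2 ^ (e - (j : ℤ) * ((k : ℤ) + 1))

def Tfun (k m N : ℕ) (e : ℤ) : ℚ :=
  ∑ j ∈ Finset.Icc 1 N, (Cnj k m j : ℚ) * 2 ^ (e - (j : ℤ) * ((k : ℤ) + 1))

lemma le_of_div_le {k m j : ℕ} (h : (m + k) / (k + 1) ≤ j) : m ≤ j * (k + 1) := by
  rw [Nat.div_le_iff_le_mul_add_pred (by omega)] at h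
  calc m ≤ (k + 1) * j := by omega
  _ = j * (k + 1) := Nat.mul_comm _ _

lemma div_le_self' {k m : ℕ} (hm : 1 ≤ m) : (m + k) / (k + 1) ≤ m :=
  Nat.div_le_of_le_mul (by nlinarith)

lemma Tfun_succ (k m N : ℕ) (e : ℤ) : Tfun k m N (e + 1) = 2 * Tfun k m N e := by
  unfold Tfun
  rw [Finset.mul_sum]
  refine Finset.sum_congr rfl fun j _ => ?_
  rw [show e + 1 - (j : ℤ) * ((k : ℤ) + 1) = (e - (j : ℤ) * ((k : ℤ) + 1)) + 1 by ring,
    zpow_add_one₀ (two_ne_zero)]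
  ring

lemma Sfun_eq (k m N : ℕ) (e : ℤ) (hk : 2 ≤ k) (hm : 2 ≤ m)
    (hN : (m + k) / (k + 1) - 1 ≤ N) (hN1 : 1 ≤ N) :
    Sfun k m e = Tfun k m N e + (if m = k + 1 then (2 : ℚ) ^ (e - ((k : ℤ) + 1)) else 0) := by
  by_cases hm1 : m = k + 1
  · subst hm1
    rw [if_pos rfl]
    unfold Sfun Tfun
    rw [show (k + 1 + k) / (k + 1) = 1 from Nat.div_eq_of_lt_le (by omega) (by omega)]
    rw [show (1 : ℕ) - 1 = 0 from rfl, show Finset.Icc 1 0 = (∅ : Finset ℕ) from Finset.Icc_eq_empty (by omega),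
      Finset.sum_empty]
    rw [Finset.sum_eq_single_of_mem 1 (Finset.mem_Icc.mpr ⟨le_refl 1, hN1⟩)
      (fun b hb hb1 => by
        rw [Cnj_vanish k (k + 1) b ((Finset.mem_Icc.mp hb).1) (by nlinarith [(Finset.mem_Icc.mp hb).1]) (by tauto)]
        norm_num)]
    rw [Cnj_one k (k + 1) (by omega)]
    push_cast
    rw [show e - 1 * ((k : ℤ) + 1) = e - ((k : ℤ) + 1) by ring]
    ring
  · rw [if_neg hm1, add_zero]
    unfold Sfun Tfun
    apply Finset.sum_subset
    · exact Finset.Icc_subset_Icc_right hN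
    · intro x hx hnx
      have hx1 : 1 ≤ x := (Finset.mem_Icc.mp hx).1
      have hq : 1 ≤ (m + k) / (k + 1) := (Nat.one_le_div_iff (by omega)).mpr (by omega)
      have hqx : (m + k) / (k + 1) ≤ x := by
        rcases Finset.mem_Icc.not.mp hnx with h
        omega
      rw [Cnj_vanish k m x hx1 (le_of_div_le hqx) (by rintro ⟨-, h2⟩; exact hm1 h2)]
      norm_num

lemma Tfun_shift (k m N : ℕ) (e : ℤ) (hk : 2 ≤ k) (hN : 2 ≤ N) (hmN : m ≤ N * (k + 1)) :
    Tfun k m N (e - ((k : ℤ) + 1))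
      = (∑ j ∈ Finset.Icc 1 N, (Cnj k m (j - 1) : ℚ) * 2 ^ (e - (j : ℤ) * ((k : ℤ) + 1)))
        - (2 : ℚ) ^ (e - ((k : ℤ) + 1)) := by
  unfold Tfun
  set f : ℕ → ℚ := fun j => (Cnj k m (j - 1) : ℚ) * 2 ^ (e - (j : ℤ) * ((k : ℤ) + 1)) with hf
  have h1 : ∀ j : ℕ, (Cnj k m j : ℚ) * 2 ^ (e - ((k : ℤ) + 1) - (j : ℤ) * ((k : ℤ) + 1))
      = f (j + 1) := by
    intro j
    rw [hf]
    simp only [Nat.add_sub_cancel]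
    congr 1
    push_cast
    ring
  have h2 : ∑ j ∈ Finset.Icc 1 N, (Cnj k m j : ℚ) * 2 ^ (e - ((k : ℤ) + 1) - (j : ℤ) * ((k : ℤ) + 1))
      = ∑ j ∈ Finset.Icc (1 + 1) (N + 1), f j := by
    rw [← Finset.map_add_right_Icc 1 N 1, Finset.sum_map]
    refine Finset.sum_congr rfl fun j _ => ?_
    rw [show (addRightEmbedding 1) j = j + 1 from rfl]
    exact h1 j
  rw [h2]
  have h3 : Finset.Icc (1 + 1) (N + 1) = (Finset.Icc 1 (N + 1)).erase 1 := by
    rw [Finset.Icc_erase_left, Finset.Icc_add_one_left_eq_Ioc]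
  have h4 := Finset.add_sum_erase (Finset.Icc 1 (N + 1)) f
    (Finset.mem_Icc.mpr ⟨le_refl 1, by omega⟩)
  have h5 : ∑ j ∈ Finset.Icc 1 (N + 1), f j = ∑ j ∈ Finset.Icc 1 N, f j + f (N + 1) :=
    Finset.sum_Icc_succ_top (by omega) f
  have h6 : f (N + 1) = 0 := by
    rw [hf]
    simp only [Nat.add_sub_cancel]
    rw [Cnj_vanish k m N (by omega) hmN (by omega)]
    norm_num
  have h7 : f 1 = (2 : ℚ) ^ (e - ((k : ℤ) + 1)) := by
    rw [hf]
    simp only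
    rw [show (1 : ℕ) - 1 = 0 from rfl, Cnj_zero]
    push_cast
    rw [show e - 1 * ((k : ℤ) + 1) = e - ((k : ℤ) + 1) by ring]
    ring
  rw [h3]
  rw [← h7]
  linarith [h4, h5, h6]

lemma Dsum (k m n : ℕ) (e : ℤ) (hk : 2 ≤ k) (hm : k ≤ m) (hn : 2 ≤ n) :
    Tfun k (m + 1) n e - Tfun k m n e
      + ∑ j ∈ Finset.Icc 1 n, (Cnj k (m - k) (j - 1) : ℚ) * 2 ^ (e - (j : ℤ) * ((k : ℤ) + 1))
      = if m = 2 * k + 1 then -(2 : ℚ) ^ (e - 2 * ((k : ℤ) + 1)) else 0 := by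
  unfold Tfun
  rw [← Finset.sum_sub_distrib, ← Finset.sum_add_distrib]
  have hterm : ∀ j ∈ Finset.Icc 1 n,
      ((Cnj k (m + 1) j : ℚ) * 2 ^ (e - (j : ℤ) * ((k : ℤ) + 1))
        - (Cnj k m j : ℚ) * 2 ^ (e - (j : ℤ) * ((k : ℤ) + 1))
        + (Cnj k (m - k) (j - 1) : ℚ) * 2 ^ (e - (j : ℤ) * ((k : ℤ) + 1)))
      = if j = 2 ∧ m = 2 * k + 1 then -(2 : ℚ) ^ (e - (j : ℤ) * ((k : ℤ) + 1)) else 0 := by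
    intro j hj
    have hj1 : 1 ≤ j := (Finset.mem_Icc.mp hj).1
    have hkey := Cnj_key k m j hk hm hj1
    have hq : (Cnj k (m + 1) j : ℚ) = (Cnj k m j : ℚ) - (Cnj k (m - k) (j - 1) : ℚ)
        - (if m = 2 * k + 1 ∧ j = 2 then 1 else 0) := by
      have := congrArg (fun z : ℤ => (z : ℚ)) hkey
      simpa [apply_ite (fun z : ℤ => (z : ℚ))] using this
    rw [hq]
    by_cases hc : m = 2 * k + 1 ∧ j = 2
    · rw [if_pos hc, if_pos ⟨hc.2, hc.1⟩]
      ring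
    · rw [if_neg hc, if_neg (by tauto)]
      ring
  rw [Finset.sum_congr rfl hterm]
  by_cases hm2 : m = 2 * k + 1
  · simp only [hm2, and_true]
    rw [Finset.sum_ite_eq' (Finset.Icc 1 n) 2
      (fun j => -(2 : ℚ) ^ (e - (j : ℤ) * ((k : ℤ) + 1)))]
    rw [if_pos (Finset.mem_Icc.mpr ⟨by omega, by omega⟩)]
    norm_num
  · simp [hm2]

def Rfun (k n : ℕ) : ℚ :=
  3 * 2 ^ ((n : ℤ) - 2) + 4 * Sfun k (n + 1) ((n : ℤ) - 2) - Sfun k n ((n : ℤ) - 2)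

lemma Rfun_rec (k n : ℕ) (hk : 2 ≤ k) (hn : k + 3 ≤ n) :
    Rfun k n = 2 * Rfun k (n - 1) - Rfun k (n - k - 1) := by
  have hn1 : ((n - 1 : ℕ) : ℤ) = (n : ℤ) - 1 := by omega
  have hnk : ((n - k - 1 : ℕ) : ℤ) = (n : ℤ) - k - 1 := by omega
  set e : ℤ := (n : ℤ) - 2 with he
  have hd1 : (n + 1 + k) / (k + 1) - 1 ≤ n := by
    have := div_le_self' (k := k) (m := n + 1) (by omega); omega
  have hd2 : (n + k) / (k + 1) - 1 ≤ n := by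
    have := div_le_self' (k := k) (m := n) (by omega); omega
  have hd3 : (n - 1 + k) / (k + 1) - 1 ≤ n := by
    have := div_le_self' (k := k) (m := n - 1) (by omega); omega
  have hd4 : (n - k + k) / (k + 1) - 1 ≤ n := by
    have := div_le_self' (k := k) (m := n - k) (by omega); omega
  have hd5 : (n - k - 1 + k) / (k + 1) - 1 ≤ n := by
    have := div_le_self' (k := k) (m := n - k - 1) (by omega); omega
  have hRn : Rfun k n = 3 * 2 ^ e + 4 * Tfun k (n + 1) n e - Tfun k n n e := by
    unfold Rfun
    rw [Sfun_eq k (n + 1) n e hk (by omega) hd1 (by omega),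
      Sfun_eq k n n e hk (by omega) hd2 (by omega),
      if_neg (by omega), if_neg (by omega)]
    ring
  have hRn1 : 2 * Rfun k (n - 1) = 3 * 2 ^ e + 4 * Tfun k n n e - Tfun k (n - 1) n e := by
    unfold Rfun
    rw [show n - 1 + 1 = n by omega, hn1,
      show (n : ℤ) - 1 - 2 = e - 1 by rw [he]; ring]
    rw [Sfun_eq k n n (e - 1) hk (by omega) hd2 (by omega),
      Sfun_eq k (n - 1) n (e - 1) hk (by omega) hd3 (by omega),
      if_neg (by omega), if_neg (by omega)]
    have t1 := Tfun_succ k n n (e - 1)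
    have t2 := Tfun_succ k (n - 1) n (e - 1)
    rw [show e - 1 + 1 = e by ring] at t1 t2
    have h2e : (2 : ℚ) ^ (e - 1) * 2 = 2 ^ e := by
      rw [← zpow_add_one₀ (two_ne_zero : (2:ℚ) ≠ 0)]
      congr 1; ring
    linarith [t1, t2, h2e]
  have hmul : n ≤ n * (k + 1) := Nat.le_mul_of_pos_right n (by omega)
  have hU1 := Tfun_shift k (n - k) n e hk (by omega)
    (le_trans (Nat.sub_le n k) hmul)
  have hU2 := Tfun_shift k (n - k - 1) n e hk (by omega)
    (le_trans (le_trans (Nat.sub_le _ 1) (Nat.sub_le n k)) hmul)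
  have hRnk : Rfun k (n - k - 1)
      = 3 * 2 ^ (e - ((k : ℤ) + 1))
        + 4 * ((∑ j ∈ Finset.Icc 1 n, (Cnj k (n - k) (j - 1) : ℚ)
                  * 2 ^ (e - (j : ℤ) * ((k : ℤ) + 1)))
            - 2 ^ (e - ((k : ℤ) + 1))
            + (if n - k = k + 1 then (2 : ℚ) ^ (e - 2 * ((k : ℤ) + 1)) else 0))
        - ((∑ j ∈ Finset.Icc 1 n, (Cnj k (n - k - 1) (j - 1) : ℚ)
                  * 2 ^ (e - (j : ℤ) * ((k : ℤ) + 1)))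
            - 2 ^ (e - ((k : ℤ) + 1))
            + (if n - k - 1 = k + 1 then (2 : ℚ) ^ (e - 2 * ((k : ℤ) + 1)) else 0)) := by
    unfold Rfun
    rw [show n - k - 1 + 1 = n - k by omega, hnk,
      show (n : ℤ) - k - 1 - 2 = e - ((k : ℤ) + 1) by rw [he]; ring]
    rw [Sfun_eq k (n - k) n (e - ((k : ℤ) + 1)) hk (by omega) hd4 (by omega),
      Sfun_eq k (n - k - 1) n (e - ((k : ℤ) + 1)) hk (by omega) hd5 (by omega)]
    rw [hU1, hU2]
    rw [show e - ((k : ℤ) + 1) - ((k : ℤ) + 1) = e - 2 * ((k : ℤ) + 1) by ring]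
  have hD1 := Dsum k n n e hk (by omega) (by omega)
  have hD2 := Dsum k (n - 1) n e hk (by omega) (by omega)
  rw [show n - 1 + 1 = n by omega, show n - 1 - k = n - k - 1 by omega] at hD2
  rw [hRn, hRn1, hRnk]
  by_cases h1 : n = 2 * k + 1
  · rw [if_pos h1] at hD1
    rw [if_neg (show ¬(n - 1 = 2 * k + 1) by omega)] at hD2
    rw [if_pos (show n - k = k + 1 by omega),
      if_neg (show ¬(n - k - 1 = k + 1) by omega)]
    linarith [hD1, hD2]
  · by_cases h2 : n = 2 * k + 2
    · rw [if_neg (show ¬(n = 2 * k + 1) by omega)] at hD1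
      rw [if_pos (show n - 1 = 2 * k + 1 by omega)] at hD2
      rw [if_neg (show ¬(n - k = k + 1) by omega),
        if_pos (show n - k - 1 = k + 1 by omega)]
      linarith [hD1, hD2]
    · rw [if_neg (show ¬(n = 2 * k + 1) by omega)] at hD1
      rw [if_neg (show ¬(n - 1 = 2 * k + 1) by omega)] at hD2
      rw [if_neg (show ¬(n - k = k + 1) by omega),
        if_neg (show ¬(n - k - 1 = k + 1) by omega)]
      linarith [hD1, hD2]

lemma Rfun_base1 (k n : ℕ) (hk : 2 ≤ k) (h2 : 2 ≤ n) (hnk : n ≤ k) :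
    Rfun k n = 3 * 2 ^ ((n : ℤ) - 2) := by
  unfold Rfun Sfun
  rw [show (n + 1 + k) / (k + 1) = 1 from Nat.div_eq_of_lt_le (by omega) (by omega),
    show (n + k) / (k + 1) = 1 from Nat.div_eq_of_lt_le (by omega) (by omega),
    show (1 : ℕ) - 1 = 0 from rfl,
    show Finset.Icc 1 0 = (∅ : Finset ℕ) from Finset.Icc_eq_empty (by omega),
    Finset.sum_empty]
  ring

lemma Rfun_base2 (k : ℕ) (hk : 2 ≤ k) : Rfun k (k + 1) = 3 * 2 ^ ((k : ℤ) - 1) - 2 := by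
  unfold Rfun Sfun
  rw [show (k + 1 + 1 + k) / (k + 1) = 2 from Nat.div_eq_of_lt_le (by omega) (by omega),
    show (k + 1 + k) / (k + 1) = 1 from Nat.div_eq_of_lt_le (by omega) (by omega),
    show (2 : ℕ) - 1 = 1 from rfl, show (1 : ℕ) - 1 = 0 from rfl,
    show Finset.Icc 1 0 = (∅ : Finset ℕ) from Finset.Icc_eq_empty (by omega),
    Finset.sum_empty, Finset.Icc_self, Finset.sum_singleton,
    Cnj_one k (k + 1 + 1) (by omega)]
  push_cast
  rw [show ((k : ℤ) + 1 - 2 - 1 * ((k : ℤ) + 1)) = -2 by ring,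
    show ((k : ℤ) + 1 - 2) = (k : ℤ) - 1 by ring,
    show (-((k : ℚ) + 1 + 1 - k)) = -2 by ring]
  norm_num
  ring

lemma Rfun_base3 (k : ℕ) (hk : 2 ≤ k) : Rfun k (k + 2) = 3 * 2 ^ ((k : ℤ)) - 5 := by
  unfold Rfun Sfun
  rw [show (k + 2 + 1 + k) / (k + 1) = 2 from Nat.div_eq_of_lt_le (by omega) (by omega),
    show (k + 2 + k) / (k + 1) = 2 from Nat.div_eq_of_lt_le (by omega) (by omega),
    show (2 : ℕ) - 1 = 1 from rfl,
    Finset.Icc_self, Finset.sum_singleton, Finset.sum_singleton,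
    Cnj_one k (k + 2 + 1) (by omega), Cnj_one k (k + 2) (by omega)]
  push_cast
  rw [show ((k : ℤ) + 2 - 2 - 1 * ((k : ℤ) + 1)) = -1 by ring,
    show ((k : ℤ) + 2 - 2) = (k : ℤ) by ring,
    show (-((k : ℚ) + 2 + 1 - k)) = -3 by ring,
    show (-((k : ℚ) + 2 - k)) = -2 by ring]
  norm_num
  ring

lemma Rfun_spec (k n : ℕ) : Rfun k n = 3 * (2:ℚ) ^ ((n : ℤ) - 2)
        + ∑ j ∈ Finset.Icc 1 ((n + 1 + k) / (k + 1) - 1),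
            4 * (Cnj k (n + 1) j : ℚ) * (2:ℚ) ^ ((n : ℤ) - (j : ℤ) * ((k : ℤ) + 1) - 2)
        - ∑ j ∈ Finset.Icc 1 ((n + k) / (k + 1) - 1),
            (Cnj k n j : ℚ) * (2:ℚ) ^ ((n : ℤ) - (j : ℤ) * ((k : ℤ) + 1) - 2) := by
  unfold Rfun Sfun
  rw [Finset.mul_sum]
  congr 1
  · congr 1
    apply Finset.sum_congr rfl
    intro j _
    rw [show (n:ℤ) - 2 - (j:ℤ) * ((k:ℤ)+1) = (n:ℤ) - (j:ℤ)*((k:ℤ)+1) - 2 by ring, mul_assoc]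
  · apply Finset.sum_congr rfl
    intro j _
    rw [show (n:ℤ) - 2 - (j:ℤ) * ((k:ℤ)+1) = (n:ℤ) - (j:ℤ)*((k:ℤ)+1) - 2 by ring]



theorem stmt_10 (k : ℕ) (hk : 2 ≤ k) (L : ℤ → ℤ)
    (hL0 : L 0 = 2) (hL1 : L 1 = 1)
    (hLneg : ∀ n : ℤ, 2 - (k : ℤ) ≤ n → n ≤ -1 → L n = 0)
    (hLrec : ∀ n : ℤ, L n = ∑ i ∈ Finset.range k, L (n - 1 - (i : ℤ))) :
    ∀ n : ℕ, 2 ≤ n →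
      (L n : ℚ) = 3 * (2 : ℚ) ^ ((n : ℤ) - 2)
        + ∑ j ∈ Finset.Icc 1 ((n + 1 + k) / (k + 1) - 1),
            4 * (Cnj k (n + 1) j : ℚ) * (2 : ℚ) ^ ((n : ℤ) - (j : ℤ) * ((k : ℤ) + 1) - 2)
        - ∑ j ∈ Finset.Icc 1 ((n + k) / (k + 1) - 1),
            (Cnj k n j : ℚ) * (2 : ℚ) ^ ((n : ℤ) - (j : ℤ) * ((k : ℤ) + 1) - 2) := by
  -- two-term recurrence
  have hrec2 : ∀ z : ℤ, L z = 2 * L (z - 1) - L (z - 1 - (k : ℤ)) := by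
    intro z
    have h1 := hLrec z
    have h2 := hLrec (z - 1)
    obtain ⟨m, hm⟩ : ∃ m, k = m + 1 := ⟨k - 1, by omega⟩
    rw [hm, Finset.sum_range_succ'] at h1
    rw [hm, Finset.sum_range_succ] at h2
    have he : ∀ i : ℕ, z - 1 - ((i + 1 : ℕ) : ℤ) = z - 1 - 1 - (i : ℤ) := by
      intro i; push_cast; ring
    rw [Finset.sum_congr rfl (fun i _ => congrArg L (he i))] at h1
    have h0 : z - 1 - ((0 : ℕ) : ℤ) = z - 1 := by push_cast; ring
    rw [h0] at h1
    have hmk : z - 1 - 1 - ((m : ℕ) : ℤ) = z - 1 - (k : ℤ) := by rw [hm]; push_cast; ring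
    rw [hmk] at h2
    linarith [h1, h2]
  -- values of L on [2, k]
  have hLval1 : ∀ n : ℕ, 2 ≤ n → n ≤ k → L n = 3 * 2 ^ (n - 2) := by
    intro n hn
    induction n, hn using Nat.le_induction with
    | base =>
      intro _
      have h := hLrec 2
      obtain ⟨m, hm⟩ : ∃ m, k = m + 2 := ⟨k - 2, by omega⟩
      rw [hm, Finset.sum_range_succ', Finset.sum_range_succ'] at h
      have hz : ∀ i ∈ Finset.range m, L (2 - 1 - ((i + 1 + 1 : ℕ) : ℤ)) = 0 := by
        intro i hi
        have him := Finset.mem_range.mp hi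
        apply hLneg <;> push_cast <;> omega
      rw [Finset.sum_eq_zero hz] at h
      norm_num at h
      rw [hL0, hL1] at h
      norm_num
      rw [h]
      norm_num
    | succ n hn ih =>
      intro hnk
      have h := hrec2 ((n : ℤ) + 1)
      rw [show ((n : ℤ) + 1 - 1) = (n : ℤ) by ring] at h
      rw [hLneg ((n : ℤ) - (k : ℤ)) (by omega) (by omega)] at h
      rw [ih (by omega)] at h
      rw [show ((n + 1 : ℕ) : ℤ) = (n : ℤ) + 1 by push_cast; ring, h,
        show n + 1 - 2 = (n - 2) + 1 by omega, pow_succ]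
      ring
  have hLk1 : L ((k + 1 : ℕ) : ℤ) = 3 * 2 ^ (k - 1) - 2 := by
    have h := hrec2 ((k : ℤ) + 1)
    rw [show ((k : ℤ) + 1 - 1) = (k : ℤ) by ring,
      show ((k : ℤ) - (k : ℤ)) = 0 by ring] at h
    rw [hLval1 k (by omega) (le_refl k), hL0] at h
    rw [show ((k + 1 : ℕ) : ℤ) = (k : ℤ) + 1 by push_cast; ring, h,
      show k - 1 = (k - 2) + 1 by omega, pow_succ]
    ring
  have hLk2 : L ((k + 2 : ℕ) : ℤ) = 3 * 2 ^ k - 5 := by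
    have h := hrec2 ((k : ℤ) + 2)
    rw [show ((k : ℤ) + 2 - 1) = (k : ℤ) + 1 by ring,
      show ((k : ℤ) + 1 - (k : ℤ)) = 1 by ring] at h
    rw [show ((k : ℤ) + 1) = ((k + 1 : ℕ) : ℤ) by push_cast; ring, hLk1, hL1] at h
    rw [show ((k + 2 : ℕ) : ℤ) = (k : ℤ) + 2 by push_cast; ring, h,
      show k = (k - 1) + 1 by omega, pow_succ,
      show k - 1 + 1 - 1 = k - 1 by omega]
    ring
  have main : ∀ n : ℕ, 2 ≤ n → (L n : ℚ) = Rfun k n := by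
    intro n
    induction n using Nat.strong_induction_on with
    | _ n ih =>
      intro hn2
      by_cases hc1 : n ≤ k
      · rw [hLval1 n hn2 hc1, Rfun_base1 k n hk hn2 hc1]
        rw [show (n : ℤ) - 2 = ((n - 2 : ℕ) : ℤ) by omega, zpow_natCast]
        push_cast
        ring
      · by_cases hc2 : n = k + 1
        · subst hc2
          rw [hLk1, Rfun_base2 k hk]
          rw [show (k : ℤ) - 1 = ((k - 1 : ℕ) : ℤ) by omega, zpow_natCast]
          push_cast
          ring
        · by_cases hc3 : n = k + 2
          · subst hc3
            rw [hLk2, Rfun_base3 k hk]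
            rw [show (k : ℤ) = ((k : ℕ) : ℤ) from rfl, zpow_natCast]
            push_cast
            ring
          · have hn3 : k + 3 ≤ n := by omega
            have h := hrec2 (n : ℤ)
            rw [show (n : ℤ) - 1 = ((n - 1 : ℕ) : ℤ) by omega] at h
            rw [show ((n - 1 : ℕ) : ℤ) - (k : ℤ) = ((n - k - 1 : ℕ) : ℤ) by omega] at h
            have e1 := ih (n - 1) (by omega) (by omega)
            have e2 := ih (n - k - 1) (by omega) (by omega)
            rw [Rfun_rec k n hk hn3, ← e1, ← e2, h]
            push_cast
            ring
  intro n hn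
  rw [main n hn, Rfun_spec]
end

section
/- Let p be a prime and n, k, a positive integers with k ≥ 2, a ≥ 1 and 2 ≤ n ≤ k+1. Then the equation L_n^{(k)} = (p+1)·p^a − 1 has no solutions. -/
theorem stmt_11 (k : ℕ) (hk : 2 ≤ k) (L : ℤ → ℤ)
    (hL0 : L 0 = 2) (hL1 : L 1 = 1)
    (hLneg : ∀ n : ℤ, 2 - (k : ℤ) ≤ n → n ≤ -1 → L n = 0)
    (hLrec : ∀ n : ℤ, L n = ∑ i ∈ Finset.range k, L (n - 1 - (i : ℤ)))
    (p : ℕ) (hp : p.Prime) (a : ℕ) (ha : 1 ≤ a)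
    (n : ℕ) (hn2 : 2 ≤ n) (hnk : n ≤ k + 1) :
    L n ≠ ((p : ℤ) + 1) * (p : ℤ) ^ a - 1 := by
  -- step identity: L m = 2 * L (m-1) - L (m-1-k)
  have step : ∀ m : ℤ, L m = 2 * L (m - 1) - L (m - 1 - (k : ℤ)) := by
    intro m
    obtain ⟨k', hk'⟩ : ∃ k', k = k' + 1 := ⟨k - 1, by omega⟩
    have h1 := hLrec m
    have h2 := hLrec (m - 1)
    rw [hk', Finset.sum_range_succ'] at h1
    rw [hk', Finset.sum_range_succ] at h2
    have e1 : ∀ i ∈ Finset.range k', L (m - 1 - ((i + 1 : ℕ) : ℤ)) = L (m - 1 - 1 - (i : ℤ)) := by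
      intro i _; push_cast; ring_nf
    rw [Finset.sum_congr rfl e1] at h1
    have key : L m - L (m - 1 - ((0 : ℕ) : ℤ)) = L (m - 1) - L (m - 1 - 1 - (k' : ℤ)) := by
      rw [h1, h2]; ring
    have a1 : m - 1 - ((0 : ℕ) : ℤ) = m - 1 := by push_cast; ring
    have a2 : m - 1 - 1 - (k' : ℤ) = m - 1 - (k : ℤ) := by rw [hk']; push_cast; ring
    rw [a1, a2] at key
    linarith
  -- L 2 = 3
  have hL2 : L 2 = 3 := by
    obtain ⟨k', hk'⟩ : ∃ k', k = k' + 2 := ⟨k - 2, by omega⟩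
    have h := hLrec 2
    rw [hk', Finset.sum_range_succ', Finset.sum_range_succ'] at h
    have e1 : ∀ i ∈ Finset.range k', L (2 - 1 - ((i + 1 + 1 : ℕ) : ℤ)) = 0 := by
      intro i hi
      have hik : (i : ℤ) < (k' : ℤ) := by exact_mod_cast Finset.mem_range.mp hi
      apply hLneg
      · rw [hk']; push_cast; omega
      · push_cast; omega
    rw [Finset.sum_congr rfl e1] at h
    simp at h
    norm_num [hL0, hL1] at h
    omega
  -- L m = 3 * 2^(m-2) for 2 ≤ m ≤ k
  have hpow : ∀ m : ℕ, 2 ≤ m → m ≤ k → L m = 3 * 2 ^ (m - 2) := by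
    intro m
    induction m with
    | zero => omega
    | succ m ih =>
      intro hm2 hmk
      rcases Nat.lt_or_ge m 2 with hm | hm
      · interval_cases m
        · omega
        · simpa using hL2
      · have hs := step ((m : ℤ) + 1)
        have hz : L ((m : ℤ) + 1 - 1 - (k : ℤ)) = 0 := by
          apply hLneg <;> omega
        have him : L m = 3 * 2 ^ (m - 2) := ih hm (by omega)
        have hcast : ((m + 1 : ℕ) : ℤ) = (m : ℤ) + 1 := by push_cast; ring
        rw [hcast, hs, hz]
        have : (m : ℤ) + 1 - 1 = (m : ℤ) := by ring
        rw [this, him]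
        rw [show m + 1 - 2 = (m - 2) + 1 from by omega, pow_succ]
        ring
  -- L (k+1) = 3 * 2^(k-1) - 2
  have hLk1 : L ((k : ℤ) + 1) = 3 * 2 ^ (k - 1) - 2 := by
    have hs := step ((k : ℤ) + 1)
    rw [show (k : ℤ) + 1 - 1 - (k : ℤ) = 0 from by ring, show (k : ℤ) + 1 - 1 = (k : ℤ) from by ring,
      hL0, hpow k hk le_rfl] at hs
    rw [hs, show k - 1 = (k - 2) + 1 from by omega, pow_succ]
    ring
  -- evenness of (p+1) * p^a
  have hev : (2 : ℤ) ∣ ((p : ℤ) + 1) * (p : ℤ) ^ a := by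
    obtain ⟨b, rfl⟩ : ∃ b, a = b + 1 := ⟨a - 1, by omega⟩
    have h2 : (2 : ℤ) ∣ (p : ℤ) * ((p : ℤ) + 1) := (Int.even_mul_succ_self (p : ℤ)).two_dvd
    have : ((p : ℤ) + 1) * (p : ℤ) ^ (b + 1) = ((p : ℤ) * ((p : ℤ) + 1)) * (p : ℤ) ^ b := by ring
    rw [this]
    exact Dvd.dvd.mul_right h2 _
  intro heq
  obtain ⟨c, hc⟩ := hev
  rcases Nat.lt_or_ge n (k + 1) with hlt | hge
  · -- n ≤ k
    rw [hpow n hn2 (by omega)] at heq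
    rcases Nat.lt_or_ge n 3 with h3 | h3
    · -- n = 2 : (p+1)*p^a = 4
      have hn : n = 2 := by omega
      subst hn
      norm_num at heq
      have h4 : (p + 1) * p ^ a = 4 := by exact_mod_cast by linarith [heq]
      have hp2 : 2 ≤ p := hp.two_le
      have hpa : p ≤ p ^ a := Nat.le_self_pow (by omega) p
      nlinarith
    · -- n ≥ 3 : RHS even, LHS+1 odd
      have hd : (2 : ℤ) ∣ 3 * 2 ^ (n - 2) := by
        refine Dvd.dvd.mul_left ?_ 3
        exact dvd_pow_self 2 (by omega)
      obtain ⟨d, hd⟩ := hd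
      rw [hd, hc] at heq
      omega
  · -- n = k + 1
    have hn : n = k + 1 := by omega
    subst hn
    have : ((k + 1 : ℕ) : ℤ) = (k : ℤ) + 1 := by push_cast; ring
    rw [this, hLk1, hc] at heq
    have hd : (2 : ℤ) ∣ 3 * 2 ^ (k - 1) := by
      refine Dvd.dvd.mul_left ?_ 3
      exact dvd_pow_self 2 (by omega)
    obtain ⟨d, hd⟩ := hd
    rw [hd] at heq
    omega
end

section
/- For every integer k ≥ 2, letting α denote the unique real root of g_k(X) = X^k − X^{k−1} − ⋯ − X − 1 greater than 1 and f_k(x) = (x−1)/(2 + (k+1)(x−2)), one has 1/2 < f_k(α) ≤ 3/4. -/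
lemma aux_pow_ge : ∀ k : ℕ, 3 ≤ k → (3 * (k : ℝ) - 1) / 2 ≤ ((5 : ℝ) / 3) ^ k := by
  intro k hk
  induction k with
  | zero => omega
  | succ n ih =>
    rcases Nat.lt_or_ge n 3 with h | h
    · interval_cases n
      · omega
      · omega
      · push_cast; norm_num
    · have hn := ih (by omega)
      have h5 : ((5:ℝ)/3) ^ (n+1) = (5/3) * (5/3)^n := by ring
      have hn3 : (3:ℝ) ≤ (n:ℝ) := by exact_mod_cast h
      push_cast
      nlinarith [hn, hn3]

theorem stmt_17 (k : ℕ) (hk : 2 ≤ k) (α : ℝ) (hα : 1 < α)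
    (hroot : α ^ k = ∑ i ∈ Finset.range k, α ^ i) :
    1 / 2 < (α - 1) / (2 + ((k : ℝ) + 1) * (α - 2)) ∧
    (α - 1) / (2 + ((k : ℝ) + 1) * (α - 2)) ≤ 3 / 4 := by
  have hpow_pos : 0 < α ^ k := pow_pos (by linarith) k
  have hgs := geom_sum_mul α k
  rw [← hroot] at hgs
  have hkey : α ^ k * (2 - α) = 1 := by linarith [hgs]
  have hα2 : α < 2 := by nlinarith [hkey, hpow_pos]
  -- α^k ≥ k
  have hk_le : (k : ℝ) ≤ α ^ k := by
    rw [hroot]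
    calc (k : ℝ) = ∑ _i ∈ Finset.range k, (1 : ℝ) := by simp
    _ ≤ ∑ i ∈ Finset.range k, α ^ i := by
        apply Finset.sum_le_sum
        intro i _
        exact one_le_pow₀ hα.le
  have hkR : (2 : ℝ) ≤ (k : ℝ) := by exact_mod_cast hk
  -- α ≥ 2 - 1/k
  have hα_lb : 2 - 1 / (k : ℝ) ≤ α := by
    have h1 : (k : ℝ) * (2 - α) ≤ α ^ k * (2 - α) := by
      apply mul_le_mul_of_nonneg_right hk_le (by linarith)
    rw [hkey] at h1
    have hkpos : (0:ℝ) < (k:ℝ) := by linarith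
    have hinv : (1 / (k:ℝ)) * (k:ℝ) = 1 := by field_simp
    nlinarith [h1, hinv, hkpos]
  -- main bound: α^k ≥ (3k-1)/2
  have hbound : (3 * (k : ℝ) - 1) / 2 ≤ α ^ k := by
    rcases eq_or_lt_of_le hk with h2 | h3
    · -- k = 2
      subst h2
      have h32 : (3:ℝ)/2 ≤ α := by
        have : 1 / (2:ℝ) = 1/((2:ℕ):ℝ) := by norm_num
        linarith [hα_lb, this ▸ hα_lb]
      push_cast
      nlinarith [h32]
    · -- k ≥ 3
      have hk3 : 3 ≤ k := h3
      have hk3R : (3:ℝ) ≤ (k:ℝ) := by exact_mod_cast hk3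
      have h53 : (5:ℝ)/3 ≤ α := by
        have : 1 / (k:ℝ) ≤ 1/3 := by
          rw [div_le_div_iff₀ (by linarith) (by norm_num)]; linarith
        linarith [hα_lb]
      calc (3 * (k : ℝ) - 1) / 2 ≤ ((5:ℝ)/3) ^ k := aux_pow_ge k hk3
      _ ≤ α ^ k := pow_le_pow_left₀ (by norm_num) h53 k
  -- denominator positive
  have hD : 0 < 2 + ((k : ℝ) + 1) * (α - 2) := by
    have h1 : ((k:ℝ) + 1) * (2 - α) < 2 := by
      nlinarith [hkey, hbound, hpow_pos, hkR, hα2]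
    nlinarith [h1]
  constructor
  · rw [lt_div_iff₀ hD]
    nlinarith [hα2, hkR]
  · rw [div_le_iff₀ hD]
    nlinarith [hkey, hbound, hα2, hkR]
end
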